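/- arXiv:2306.13019 — 6 statements merged into one kernel-verified Lean document; each statement's English description precedes it below -/
import Mathlib

section
/- Let A_n be the set of bitstrings of length 2n+1 with exactly n ones and B_n the set with exactly n+1 ones. Then A_n = { σ^s(x0) : x a Dyck word of length 2n, 0 ≤ s ≤ 2n } and B_n = { σ^s(x1) : x a Dyck word of length 2n, 0 ≤ s ≤ 2n }. -/
/-- Every prefix has at least as many 1s (`true`) as 0s (`false`). -/
def IsDyckPrefix (x : List Bool) : Prop :=
  ∀ p : List Bool, p <+: x → p.count false ≤ p.count true

/-- A (balanced) Dyck word. -/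
def IsDyckWord (x : List Bool) : Prop :=
  x.count true = x.count false ∧ IsDyckPrefix x

/-- A Dyck word of length `2*n` (so with `n` ones). -/
def DyckN (n : ℕ) (x : List Bool) : Prop :=
  x.length = 2 * n ∧ x.count true = n ∧ IsDyckPrefix x

/-- Cyclic right rotation by `s` steps. -/
def rotR (s : ℕ) (x : List Bool) : List Bool :=
  x.rotate (x.length - s % x.length)

private lemma bool_count_len (l : List Bool) : l.count true + l.count false = l.length := by
  induction l with
  | nil => simp
  | cons a l ih => cases a <;> simp [List.count_cons] <;> omega

private lemma rot_count1 (y : List Bool) (b : Bool) (k j : ℕ) (h : k + j ≤ y.length) :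
    ((y.rotate k).take j).count b + (y.take k).count b = (y.take (k + j)).count b := by
  have hk : k ≤ y.length := le_trans (Nat.le_add_right _ _) h
  rw [List.rotate_eq_drop_append_take hk,
    List.take_append_of_le_length (by simp only [List.length_drop]; omega),
    List.take_add, List.count_append]
  omega

private lemma rot_count2 (y : List Bool) (b : Bool) (k j : ℕ) (hk : k ≤ y.length)
    (hj : j ≤ y.length) (h : y.length ≤ k + j) :
    ((y.rotate k).take j).count b + (y.take k).count b
      = y.count b + (y.take (k + j - y.length)).count b := by
  rw [List.rotate_eq_drop_append_take hk, List.take_append,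
    List.take_of_length_le (by simp only [List.length_drop]; omega),
    List.length_drop, List.take_take, List.count_append]
  have h1 : (j - (y.length - k)) ⊓ k = k + j - y.length := by omega
  rw [h1]
  have h2 : (y.take k).count b + (y.drop k).count b = y.count b := by
    rw [← List.count_append, List.take_append_drop]
  omega

/-- The height function: `#false - #true` in the prefix of length `j`. -/
private def Sf (y : List Bool) (j : ℕ) : ℤ :=
  ((y.take j).count false : ℤ) - ((y.take j).count true : ℤ)

private lemma Sf_zero (y : List Bool) : Sf y 0 = 0 := by simp [Sf]

private lemma Sf_step (y : List Bool) (j : ℕ) :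
    Sf y (j+1) ≤ Sf y j + 1 ∧ Sf y j ≤ Sf y (j+1) + 1 := by
  have h1 : ∀ b : Bool, (y.take j).count b ≤ (y.take (j+1)).count b ∧
      (y.take (j+1)).count b ≤ (y.take j).count b + 1 := by
    intro b
    rw [List.take_succ, List.count_append]
    have h1 : (y[j]?.toList).count b ≤ 1 := by
      cases h : y[j]? with
      | none => simp
      | some a => cases a <;> cases b <;> simp
    omega
  have h2 := h1 false
  have h3 := h1 true
  simp only [Sf]
  omega

private lemma Sf_key (y : List Bool) (k j : ℕ) (hk : k ≤ y.length) (hj : j ≤ y.length) :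
    Sf (y.rotate k) j = if k + j ≤ y.length then Sf y (k+j) - Sf y k
      else Sf y y.length + Sf y (k + j - y.length) - Sf y k := by
  split
  next h =>
    have c1 := rot_count1 y false k j h
    have c2 := rot_count1 y true k j h
    simp only [Sf]
    omega
  next h =>
    have c1 := rot_count2 y false k j hk hj (by omega)
    have c2 := rot_count2 y true k j hk hj (by omega)
    simp only [Sf, List.take_length]
    omega

private lemma mainA (n : ℕ) (y : List Bool) (hl : y.length = 2*n+1) (ht : y.count true = n) :
    ∃ x s, DyckN n x ∧ s ≤ 2*n ∧ y = rotR s (x ++ [false]) := by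
  have hcf : y.count false = n + 1 := by have := bool_count_len y; omega
  have hSL : Sf y (2*n+1) = 1 := by
    simp only [Sf, ← hl, List.take_length]
    rw [ht, hcf]; push_cast; ring
  have hS0 := Sf_zero y
  obtain ⟨j0, hj0mem, hj0max⟩ :=
    Finset.exists_max_image (Finset.range (2*n+2)) (Sf y) ⟨0, by simp⟩
  have hj0L : j0 ≤ 2*n+1 := by simp only [Finset.mem_range] at hj0mem; omega
  have hle : ∀ i, i ≤ 2*n+1 → Sf y i ≤ Sf y j0 := fun i hi =>
    hj0max i (by simp only [Finset.mem_range]; omega)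
  have hex : ∃ j, Sf y j = Sf y j0 := ⟨j0, rfl⟩
  obtain ⟨k, hkspec, hkmin, hkle⟩ :
      ∃ k, Sf y k = Sf y j0 ∧ (∀ i, i < k → Sf y i ≠ Sf y j0) ∧ k ≤ j0 :=
    ⟨Nat.find hex, Nat.find_spec hex, fun i hi => Nat.find_min hex hi, Nat.find_le rfl⟩
  have hkL : k ≤ 2*n+1 := le_trans hkle hj0L
  have hM1 : 1 ≤ Sf y j0 := hSL ▸ hle (2*n+1) le_rfl
  have hk1 : 1 ≤ k := by
    rcases Nat.eq_zero_or_pos k with h | h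
    · exfalso; rw [h, hS0] at hkspec; omega
    · omega
  have hstep : Sf y k ≤ Sf y (k-1) + 1 := by
    have h2 := Sf_step y (k-1)
    rw [show k - 1 + 1 = k by omega] at h2
    omega
  have hSk1 : Sf y (k-1) = Sf y j0 - 1 := by
    have h1 : Sf y (k-1) ≠ Sf y j0 := hkmin _ (by omega)
    have h2 : Sf y (k-1) ≤ Sf y j0 := hle _ (by omega)
    omega
  have hrl : (y.rotate k).length = 2*n+1 := by rw [List.length_rotate, hl]
  have hrperm := List.rotate_perm y k
  have hrct : (y.rotate k).count true = n := by rw [hrperm.count_eq, ht]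
  have hrcf : (y.rotate k).count false = n+1 := by rw [hrperm.count_eq, hcf]
  have key : ∀ j, j ≤ 2*n+1 → Sf (y.rotate k) j =
      if k + j ≤ 2*n+1 then Sf y (k+j) - Sf y k
      else Sf y (2*n+1) + Sf y (k + j - (2*n+1)) - Sf y k := by
    intro j hj
    have := Sf_key y k j (by omega) (by omega)
    rw [hl] at this
    exact this
  have hT : ∀ j, j ≤ 2*n →
      ((y.rotate k).take j).count false ≤ ((y.rotate k).take j).count true := by
    intro j hj
    have hk2 := key j (by omega)
    split at hk2
    next h =>
      have h2 := hle (k+j) h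
      simp only [Sf] at hk2 h2 hkspec
      omega
    next h =>
      have h2 := hle (k+j-(2*n+1)) (by omega)
      have h3 := hkmin (k+j-(2*n+1)) (by omega)
      simp only [Sf] at hk2 h2 h3 hkspec hSL
      omega
  have hT2 : ((y.rotate k).take (2*n)).count false = ((y.rotate k).take (2*n)).count true := by
    have hk2 := key (2*n) (by omega)
    split at hk2
    next h =>
      have e1 : Sf y (k + 2*n) = Sf y (2*n+1) := by rw [show k + 2*n = 2*n+1 by omega]
      have e2 : Sf y (k-1) = Sf y 0 := by rw [show k-1 = 0 by omega]
      simp only [Sf] at hk2 e1 e2 hSL hS0 hSk1 hkspec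
      omega
    next h =>
      have e1 : Sf y (k + 2*n - (2*n+1)) = Sf y (k-1) := by
        rw [show k + 2*n - (2*n+1) = k-1 by omega]
      simp only [Sf] at hk2 e1 hSL hSk1 hkspec
      omega
  have hxl : ((y.rotate k).take (2*n)).length = 2*n := by
    rw [List.length_take]; omega
  have hxc : ((y.rotate k).take (2*n)).count true = n ∧
      ((y.rotate k).take (2*n)).count false = n := by
    have h1 := bool_count_len ((y.rotate k).take (2*n))
    omega
  have hxd : IsDyckPrefix ((y.rotate k).take (2*n)) := by
    intro p hp
    have hpl : p.length ≤ 2*n := by have := hp.length_le; omega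
    have h1 := List.prefix_iff_eq_take.mp hp
    have h2 : ((y.rotate k).take (2*n)).take p.length = (y.rotate k).take p.length := by
      rw [List.take_take, inf_of_le_left hpl]
    rw [h1.trans h2]
    exact hT p.length hpl
  have hsplit : y.rotate k = (y.rotate k).take (2*n) ++ (y.rotate k).drop (2*n) :=
    (List.take_append_drop (2*n) (y.rotate k)).symm
  obtain ⟨c, hc⟩ : ∃ c, (y.rotate k).drop (2*n) = [c] :=
    List.length_eq_one_iff.mp (by rw [List.length_drop]; omega)
  have hcfalse : c = false := by
    have h1 : ((y.rotate k).take (2*n) ++ [c]).count false = n + 1 := by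
      rw [← hc, ← hsplit]; exact hrcf
    rw [List.count_append] at h1
    cases c
    · rfl
    · simp at h1; omega
  refine ⟨(y.rotate k).take (2*n), k % (2*n+1), ⟨hxl, hxc.1, hxd⟩, ?_, ?_⟩
  · have : k % (2*n+1) < 2*n+1 := Nat.mod_lt _ (by omega)
    omega
  · rw [← hcfalse, ← hc, ← hsplit]
    simp only [rotR]
    rw [List.length_rotate, hl,
      Nat.mod_eq_of_lt (Nat.mod_lt _ (show 0 < 2*n+1 by omega))]
    rcases Nat.lt_or_ge k (2*n+1) with hlt | hge
    · rw [Nat.mod_eq_of_lt hlt, List.rotate_rotate,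
        show k + (2*n+1 - k) = y.length by omega, List.rotate_length]
    · have hkeq : k = 2*n+1 := le_antisymm hkL hge
      rw [hkeq, Nat.mod_self, Nat.sub_zero, List.rotate_rotate,
        show 2*n+1 + (2*n+1) = y.length + y.length by omega, ← List.rotate_rotate,
        List.rotate_length, List.rotate_length]

private lemma mainB (n : ℕ) (y : List Bool) (hl : y.length = 2*n+1) (ht : y.count true = n+1) :
    ∃ x s, DyckN n x ∧ s ≤ 2*n ∧ y = rotR s (x ++ [true]) := by
  have hcf : y.count false = n := by have := bool_count_len y; omega
  have hSL : Sf y (2*n+1) = -1 := by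
    simp only [Sf, ← hl, List.take_length]
    rw [ht, hcf]; push_cast; ring
  have hS0 := Sf_zero y
  obtain ⟨j0, hj0mem, hj0max⟩ :=
    Finset.exists_max_image (Finset.range (2*n+2)) (Sf y) ⟨0, by simp⟩
  have hj0L : j0 ≤ 2*n+1 := by simp only [Finset.mem_range] at hj0mem; omega
  have hle : ∀ i, i ≤ 2*n+1 → Sf y i ≤ Sf y j0 := fun i hi =>
    hj0max i (by simp only [Finset.mem_range]; omega)
  have hM0 : 0 ≤ Sf y j0 := hS0 ▸ hle 0 (by omega)
  obtain ⟨k0, hk0spec, hgr, hk0le⟩ :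
      ∃ k0, Sf y k0 = Sf y j0 ∧ (∀ m, k0 < m → m ≤ 2*n+1 → Sf y m ≠ Sf y j0) ∧ k0 ≤ 2*n+1 :=
    ⟨Nat.findGreatest (fun j => Sf y j = Sf y j0) (2*n+1),
      Nat.findGreatest_spec (P := fun j => Sf y j = Sf y j0) hj0L rfl,
      fun m h1 h2 => Nat.findGreatest_is_greatest h1 h2,
      Nat.findGreatest_le (2*n+1)⟩
  have hk0L : k0 < 2*n+1 := by
    rcases Nat.lt_or_ge k0 (2*n+1) with h | h
    · exact h
    · exfalso
      have he : k0 = 2*n+1 := by omega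
      rw [he, hSL] at hk0spec; omega
  have hkL : k0 + 1 ≤ 2*n+1 := by omega
  have hstep : Sf y k0 - 1 ≤ Sf y (k0+1) := by
    have h2 := Sf_step y k0
    omega
  have hSk : Sf y (k0+1) = Sf y j0 - 1 := by
    have h1 : Sf y (k0+1) ≠ Sf y j0 := hgr (k0+1) (by omega) hkL
    have h2 : Sf y (k0+1) ≤ Sf y j0 := hle _ hkL
    omega
  have hrl : (y.rotate (k0+1)).length = 2*n+1 := by rw [List.length_rotate, hl]
  have hrperm := List.rotate_perm y (k0+1)
  have hrct : (y.rotate (k0+1)).count true = n+1 := by rw [hrperm.count_eq, ht]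
  have hrcf : (y.rotate (k0+1)).count false = n := by rw [hrperm.count_eq, hcf]
  have key : ∀ j, j ≤ 2*n+1 → Sf (y.rotate (k0+1)) j =
      if k0 + 1 + j ≤ 2*n+1 then Sf y (k0+1+j) - Sf y (k0+1)
      else Sf y (2*n+1) + Sf y (k0 + 1 + j - (2*n+1)) - Sf y (k0+1) := by
    intro j hj
    have := Sf_key y (k0+1) j (by omega) (by omega)
    rw [hl] at this
    exact this
  have hT : ∀ j, j ≤ 2*n →
      ((y.rotate (k0+1)).take j).count false ≤ ((y.rotate (k0+1)).take j).count true := by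
    intro j hj
    have hk2 := key j (by omega)
    split at hk2
    next h =>
      have h2 := hle (k0+1+j) h
      have h3 := hgr (k0+1+j) (by omega) h
      simp only [Sf] at hk2 h2 h3 hSk
      omega
    next h =>
      have h2 := hle (k0+1+j-(2*n+1)) (by omega)
      simp only [Sf] at hk2 h2 hSk hSL
      omega
  have hT2 : ((y.rotate (k0+1)).take (2*n)).count false
      = ((y.rotate (k0+1)).take (2*n)).count true := by
    have hk2 := key (2*n) (by omega)
    split at hk2
    next h =>
      have e1 : Sf y (k0 + 1 + 2*n) = Sf y (2*n+1) := by
        rw [show k0 + 1 + 2*n = 2*n+1 by omega]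
      have e2 : Sf y k0 = Sf y 0 := by rw [show k0 = 0 by omega]
      simp only [Sf] at hk2 e1 e2 hSL hS0 hSk hk0spec
      omega
    next h =>
      have e1 : Sf y (k0 + 1 + 2*n - (2*n+1)) = Sf y k0 := by
        rw [show k0 + 1 + 2*n - (2*n+1) = k0 by omega]
      simp only [Sf] at hk2 e1 hSL hSk hk0spec
      omega
  have hxl : ((y.rotate (k0+1)).take (2*n)).length = 2*n := by
    rw [List.length_take]; omega
  have hxc : ((y.rotate (k0+1)).take (2*n)).count true = n ∧
      ((y.rotate (k0+1)).take (2*n)).count false = n := by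
    have h1 := bool_count_len ((y.rotate (k0+1)).take (2*n))
    omega
  have hxd : IsDyckPrefix ((y.rotate (k0+1)).take (2*n)) := by
    intro p hp
    have hpl : p.length ≤ 2*n := by have := hp.length_le; omega
    have h1 := List.prefix_iff_eq_take.mp hp
    have h2 : ((y.rotate (k0+1)).take (2*n)).take p.length
        = (y.rotate (k0+1)).take p.length := by
      rw [List.take_take, inf_of_le_left hpl]
    rw [h1.trans h2]
    exact hT p.length hpl
  have hsplit : y.rotate (k0+1)
      = (y.rotate (k0+1)).take (2*n) ++ (y.rotate (k0+1)).drop (2*n) :=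
    (List.take_append_drop (2*n) (y.rotate (k0+1))).symm
  obtain ⟨c, hc⟩ : ∃ c, (y.rotate (k0+1)).drop (2*n) = [c] :=
    List.length_eq_one_iff.mp (by rw [List.length_drop]; omega)
  have hctrue : c = true := by
    have h1 : ((y.rotate (k0+1)).take (2*n) ++ [c]).count true = n + 1 := by
      rw [← hc, ← hsplit]; exact hrct
    rw [List.count_append] at h1
    cases c
    · simp at h1; omega
    · rfl
  refine ⟨(y.rotate (k0+1)).take (2*n), (k0+1) % (2*n+1), ⟨hxl, hxc.1, hxd⟩, ?_, ?_⟩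
  · have : (k0+1) % (2*n+1) < 2*n+1 := Nat.mod_lt _ (by omega)
    omega
  · rw [← hctrue, ← hc, ← hsplit]
    simp only [rotR]
    rw [List.length_rotate, hl,
      Nat.mod_eq_of_lt (Nat.mod_lt _ (show 0 < 2*n+1 by omega))]
    rcases Nat.lt_or_ge (k0+1) (2*n+1) with hlt | hge
    · rw [Nat.mod_eq_of_lt hlt, List.rotate_rotate,
        show k0+1 + (2*n+1 - (k0+1)) = y.length by omega, List.rotate_length]
    · have hkeq : k0+1 = 2*n+1 := le_antisymm hkL hge
      rw [hkeq, Nat.mod_self, Nat.sub_zero, List.rotate_rotate,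
        show 2*n+1 + (2*n+1) = y.length + y.length by omega, ← List.rotate_rotate,
        List.rotate_length, List.rotate_length]

/-- the levels `A_n` and `B_n` of `Q_{2n+1}` consist exactly of the
cyclic rotations `σ^s(x0)` resp. `σ^s(x1)` of Dyck words `x` of length `2n`,
with shifts `0 ≤ s ≤ 2n`. -/
theorem levels_eq_rotated_dyck (n : ℕ) :
    ({y : List Bool | y.length = 2 * n + 1 ∧ y.count true = n} =
      {y : List Bool | ∃ x s, DyckN n x ∧ s ≤ 2 * n ∧ y = rotR s (x ++ [false])}) ∧
    ({y : List Bool | y.length = 2 * n + 1 ∧ y.count true = n + 1} =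
      {y : List Bool | ∃ x s, DyckN n x ∧ s ≤ 2 * n ∧ y = rotR s (x ++ [true])}) := by
  constructor
  · ext y
    simp only [Set.mem_setOf_eq]
    constructor
    · rintro ⟨h1, h2⟩; exact mainA n y h1 h2
    · rintro ⟨x, s, hd, hs, rfl⟩
      have hp := List.rotate_perm (x ++ [false])
        ((x ++ [false]).length - s % (x ++ [false]).length)
      constructor
      · show (rotR s (x ++ [false])).length = 2*n+1
        rw [rotR, List.length_rotate, List.length_append, hd.1]; simp
      · show (rotR s (x ++ [false])).count true = n
        rw [rotR, hp.count_eq, List.count_append, hd.2.1]; simp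
  · ext y
    simp only [Set.mem_setOf_eq]
    constructor
    · rintro ⟨h1, h2⟩; exact mainB n y h1 h2
    · rintro ⟨x, s, hd, hs, rfl⟩
      have hp := List.rotate_perm (x ++ [true])
        ((x ++ [true]).length - s % (x ++ [true]).length)
      constructor
      · show (rotR s (x ++ [true])).length = 2*n+1
        rw [rotR, List.length_rotate, List.length_append, hd.1]; simp
      · show (rotR s (x ++ [true])).count true = n+1
        rw [rotR, hp.count_eq, List.count_append, hd.2.1]; simp
end

section
/- For every Dyck word x of length 2n, r^{2n}(x) = x, where r is the tree rotation r(1u0v) = u1v0 on Dyck words of length 2n. -/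
lemma count_tf (x : List Bool) : x.count true + x.count false = x.length := by
  induction x with
  | nil => simp
  | cons c t ih => cases c <;> simp [List.count_cons] <;> omega

lemma prefix_split {α : Type*} {p u v : List α} (h : p <+: u ++ v) :
    p <+: u ∨ ∃ q, p = u ++ q ∧ q <+: v := by
  rcases List.prefix_or_prefix_of_prefix h (List.prefix_append u v) with h1 | h1
  · exact Or.inl h1
  · obtain ⟨q, rfl⟩ := h1
    exact Or.inr ⟨q, rfl, (List.prefix_append_right_inj u).mp h⟩

lemma dyck_nil : IsDyckWord [] :=
  ⟨rfl, fun p hp => by simp [List.prefix_nil.mp hp]⟩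

lemma dyck_append {u v : List Bool} (hu : IsDyckWord u) (hv : IsDyckWord v) :
    IsDyckWord (u ++ v) := by
  constructor
  · simp [List.count_append, hu.1, hv.1]
  · intro p hp
    rcases prefix_split hp with h | ⟨q, rfl, hq⟩
    · exact hu.2 p h
    · have h1 := hv.2 q hq
      have h2 := hu.1
      simp only [List.count_append]
      omega

lemma prefix_singleton {α : Type*} {q : List α} {a : α} (h : q <+: [a]) :
    q = [] ∨ q = [a] := by
  rcases q with _ | ⟨b, q'⟩
  · exact Or.inl rfl
  · rw [List.cons_prefix_cons] at h
    obtain ⟨rfl, h2⟩ := h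
    simp [List.prefix_nil.mp h2]

lemma dyck_wrap {u : List Bool} (hu : IsDyckWord u) :
    IsDyckWord ([true] ++ u ++ [false]) := by
  constructor
  · simp [List.count_append, hu.1]
  · intro p hp
    rcases prefix_split hp with h | ⟨q, rfl, hq⟩
    · rcases prefix_split h with h2 | ⟨q2, rfl, hq2⟩
      · rcases prefix_singleton h2 with rfl | rfl <;> simp
      · have h1 := hu.2 q2 hq2
        simp only [List.count_append]
        simp [List.count_singleton']
        omega
    · have h2 := hu.1
      rcases prefix_singleton hq with rfl | rfl <;>
        simp only [List.count_append] <;> simp [List.count_singleton'] <;> omega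

lemma dyck_decomp {u : List Bool} (hu : IsDyckWord u) (hne : u ≠ []) :
    ∃ a b, IsDyckWord a ∧ IsDyckWord b ∧ u = [true] ++ a ++ [false] ++ b := by
  have hhead : ∃ t, u = true :: t := by
    cases u with
    | nil => exact absurd rfl hne
    | cons c t =>
      cases c
      · have := hu.2 [false] ⟨t, rfl⟩
        simp at this
      · exact ⟨t, rfl⟩
  have hlenpos : 0 < u.length := List.length_pos_iff.mpr hne
  have hP : ∃ m, 0 < m ∧ (u.take m).count false = (u.take m).count true :=
    ⟨u.length, hlenpos, by simp [hu.1]⟩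
  set k := Nat.find hP with hkdef
  have hk := Nat.find_spec hP
  have hkpos : 0 < k := hk.1
  have hkbal : (u.take k).count false = (u.take k).count true := hk.2
  have hkle : k ≤ u.length := Nat.find_min' hP ⟨hlenpos, by simp [hu.1]⟩
  have hk1 : k ≠ 1 := by
    intro h1
    obtain ⟨t, rfl⟩ := hhead
    rw [h1] at hkbal
    simp at hkbal
  have hk2 : 2 ≤ k := by omega
  set tk := u.take k with htk
  have htklen : tk.length = k := by
    rw [htk, List.length_take]; omega
  have htkne : tk ≠ [] := by
    intro h
    rw [h] at htklen
    simp at htklen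
    omega
  have hdl : tk.dropLast = u.take (k - 1) := by
    rw [List.dropLast_eq_take, htklen, htk, List.take_take,
      Nat.min_eq_left (by omega : k - 1 ≤ k)]
  have hlast := List.dropLast_append_getLast htkne
  set c := tk.getLast htkne with hc
  have hcount : tk.count false = tk.count true := hkbal
  have hmin1 : ¬(0 < k - 1 ∧ (u.take (k-1)).count false = (u.take (k-1)).count true) :=
    Nat.find_min hP (by omega)
  have hle1 : (u.take (k-1)).count false ≤ (u.take (k-1)).count true :=
    hu.2 _ (List.take_prefix _ _)
  have hlt1 : (u.take (k-1)).count false < (u.take (k-1)).count true := by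
    push_neg at hmin1
    have := hmin1 (by omega)
    omega
  have hcf : c = false := by
    rcases Bool.eq_false_or_eq_true c with h | h
    swap
    · exact h
    · exfalso
      rw [← hlast, h, hdl] at hcount
      simp [List.count_append, List.count_singleton'] at hcount
      omega
  have htkeq : tk = u.take (k-1) ++ [false] := by
    rw [← hlast, hdl, hcf]
  obtain ⟨t, hut⟩ := hhead
  have htake1 : u.take (k-1) = true :: t.take (k-2) := by
    rw [hut, show k - 1 = (k-2) + 1 by omega]
    simp
  set a := t.take (k-2) with hadef
  set b := u.drop k with hbdef
  have hub : u = tk ++ b := (List.take_append_drop k u).symm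
  have hudec : u = [true] ++ a ++ [false] ++ b := by
    rw [hub, htkeq, htake1]
    simp
  -- counts of tk in terms of a
  have htkcnt : tk.count false = a.count false + 1 ∧ tk.count true = a.count true + 1 := by
    rw [htkeq, htake1]
    constructor <;> simp [List.count_append, List.count_cons, List.count_singleton']
  have habal : a.count true = a.count false := by omega
  refine ⟨a, b, ⟨habal, ?_⟩, ⟨?_, ?_⟩, hudec⟩
  · -- a is a Dyck prefix
    intro p hp
    have hpt : p <+: t := hp.trans (List.take_prefix _ _)
    have hpu : true :: p <+: u := by
      rw [hut]
      exact List.cons_prefix_cons.mpr ⟨rfl, hpt⟩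
    have h1 := hu.2 _ hpu
    simp [List.count_cons] at h1
    by_contra hcon
    push_neg at hcon
    have heq : p.count false = p.count true + 1 := by omega
    -- then true :: p is a balanced prefix of length p.length + 1 < k
    have hplen : p.length ≤ k - 2 := by
      have := hp.length_le
      have := List.length_take_le (k-2) t
      calc p.length ≤ a.length := hp.length_le
        _ ≤ k - 2 := by rw [hadef]; exact List.length_take_le _ _
    have hmlt : p.length + 1 < k := by omega
    have hmeq : true :: p = u.take (p.length + 1) := by
      have := List.prefix_iff_eq_take.mp hpu
      simpa using this
    have := Nat.find_min hP hmlt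
    push_neg at this
    have h2 := this (by omega)
    rw [← hmeq] at h2
    simp [List.count_cons, heq] at h2
  · -- b balanced
    have h1 := hu.1
    rw [hub] at h1
    simp only [List.count_append] at h1
    omega
  · -- b Dyck prefix
    intro p hp
    have hpu : tk ++ p <+: u := by
      rw [hub]
      exact (List.prefix_append_right_inj tk).mpr hp
    have h1 := hu.2 _ hpu
    simp only [List.count_append] at h1
    omega

lemma key (r : List Bool → List Bool)
    (hr : ∀ u v : List Bool, IsDyckWord u → IsDyckWord v →
      r ([true] ++ u ++ [false] ++ v) = u ++ [true] ++ v ++ [false]) :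
    ∀ k u z : _, u.length ≤ k → IsDyckWord u → IsDyckWord z →
      r^[u.length] (u ++ z) = z ++ u := by
  intro k
  induction k with
  | zero =>
    intro u z h hu hz
    have : u = [] := List.length_eq_zero_iff.mp (Nat.le_zero.mp h)
    subst this
    simp
  | succ k ih =>
    intro u z hlen hu hz
    by_cases hne : u = []
    · subst hne; simp
    obtain ⟨a, b, ha, hb, hdec⟩ := dyck_decomp hu hne
    have hulen : u.length = a.length + b.length + 2 := by
      rw [hdec]; simp; omega
    have hbz : IsDyckWord (b ++ z) := dyck_append hb hz
    have step1 : r (u ++ z) = a ++ ([true] ++ (b ++ z) ++ [false]) := by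
      rw [hdec]
      have h := hr a (b ++ z) ha hbz
      simp only [List.append_assoc] at h ⊢
      exact h
    have step2 : r^[a.length] (a ++ ([true] ++ (b ++ z) ++ [false])) =
        ([true] ++ (b ++ z) ++ [false]) ++ a :=
      ih a _ (by omega) ha (dyck_wrap hbz)
    have step3 : r (([true] ++ (b ++ z) ++ [false]) ++ a) =
        b ++ (z ++ ([true] ++ a ++ [false])) := by
      have h := hr (b ++ z) a hbz ha
      simp only [List.append_assoc] at h ⊢
      exact h
    have step4 : r^[b.length] (b ++ (z ++ ([true] ++ a ++ [false]))) =
        (z ++ ([true] ++ a ++ [false])) ++ b :=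
      ih b _ (by omega) hb (dyck_append hz (dyck_wrap ha))
    have hn : u.length = b.length + (1 + (a.length + 1)) := by omega
    rw [hn, Function.iterate_add_apply, Function.iterate_add_apply,
      Function.iterate_add_apply, Function.iterate_one]
    rw [step1, step2, step3, step4, hdec]
    simp [List.append_assoc]

/-- `r^{2n}(x) = x` for every Dyck word `x` of length `2n`, where
`r` is the tree rotation. -/
theorem rotation_order_divides (n : ℕ) (r : List Bool → List Bool)
    (hr : ∀ u v : List Bool, IsDyckWord u → IsDyckWord v →
      r ([true] ++ u ++ [false] ++ v) = u ++ [true] ++ v ++ [false])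
    (x : List Bool) (hx : DyckN n x) :
    r^[2 * n] x = x := by
  obtain ⟨hlen, hcount, hpre⟩ := hx
  have htf := count_tf x
  have hd : IsDyckWord x := ⟨by omega, hpre⟩
  have h := key r hr x.length x [] le_rfl hd dyck_nil
  rw [List.append_nil, List.nil_append, hlen] at h
  exact h
end

section
/- The permutation f of the vertex set of the middle levels graph M_n defines a cycle factor: the orbits of f partition the vertices of M_n into cycles, each of which is a cycle in the graph M_n (i.e., consecutive orbit elements are adjacent in M_n and each orbit has length at least 3). -/
/-- `a` and `b` differ in exactly one bit. -/
def oneBitDiff (a b : List Bool) : Prop :=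
  a.length = b.length ∧
    ((Finset.range a.length).filter fun i => a[i]? ≠ b[i]?).card = 1

namespace CF

/-- signed balance -/
def bal (l : List Bool) : ℤ := (l.count true : ℤ) - l.count false

lemma count_tf (l : List Bool) : l.count true + l.count false = l.length := by
  induction l with
  | nil => simp
  | cons a l ih => cases a <;> simp [List.count_cons] <;> omega

lemma bal_append (a b : List Bool) : bal (a ++ b) = bal a + bal b := by
  simp [bal, List.count_append]; ring

@[simp] lemma bal_nil : bal [] = 0 := by simp [bal]

@[simp] lemma bal_true : bal [true] = 1 := by simp [bal]

@[simp] lemma bal_false : bal [false] = -1 := by simp [bal]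

lemma bal_take_append (a b : List Bool) (j : ℕ) :
    bal ((a ++ b).take j) = bal (a.take j) + bal (b.take (j - a.length)) := by
  rw [List.take_append, bal_append]

lemma bal_take_of_le {a : List Bool} {j : ℕ} (h : a.length ≤ j) : bal (a.take j) = bal a := by
  rw [List.take_of_length_le h]

lemma count_rotate (l : List Bool) (t : ℕ) (b : Bool) :
    (l.rotate t).count b = l.count b := (List.rotate_perm l t).count_eq b

lemma isDyckPrefix_iff (x : List Bool) :
    IsDyckPrefix x ↔ ∀ j, 0 ≤ bal (x.take j) := by
  constructor
  · intro h j
    have hp : x.take j <+: x := List.take_prefix j x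
    have := h _ hp
    simp [bal]; omega
  · intro h p hp
    have he : p = x.take p.length := List.prefix_iff_eq_take.mp hp
    have := h p.length
    rw [← he] at this
    simp [bal] at this; omega

lemma isDyckWord_iff (x : List Bool) :
    IsDyckWord x ↔ bal x = 0 ∧ ∀ j, 0 ≤ bal (x.take j) := by
  rw [IsDyckWord, isDyckPrefix_iff]
  constructor
  · rintro ⟨h1, h2⟩; exact ⟨by simp [bal, h1], h2⟩
  · rintro ⟨h1, h2⟩; refine ⟨?_, h2⟩; simp [bal] at h1; omega

lemma dyckN_iff (n : ℕ) (x : List Bool) :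
    DyckN n x ↔ x.length = 2 * n ∧ x.count true = n ∧ ∀ j, 0 ≤ bal (x.take j) := by
  rw [DyckN, isDyckPrefix_iff]

lemma dyckN_isDyckWord {n : ℕ} {x : List Bool} (h : DyckN n x) : IsDyckWord x := by
  obtain ⟨h1, h2, h3⟩ := h
  refine ⟨?_, h3⟩
  have := count_tf x
  omega

lemma bal_dyckN {n : ℕ} {x : List Bool} (h : DyckN n x) : bal x = 0 := by
  have := count_tf x
  obtain ⟨h1, h2, _⟩ := h
  simp [bal]; omega


/-- balance of a prefix of a rotation, first regime -/
lemma bal_take_rotate_lo (w : List Bool) {k i : ℕ} (hk : k ≤ w.length)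
    (hi : i ≤ w.length - k) :
    bal ((w.rotate k).take i) = bal (w.take (k + i)) - bal (w.take k) := by
  rw [List.rotate_eq_drop_append_take hk]
  have h1 : (w.drop k ++ w.take k).take i = (w.drop k).take i := by
    apply List.take_append_of_le_length
    simp [List.length_drop]; omega
  rw [h1]
  have h2 : w.take (k + i) = w.take k ++ (w.drop k).take i := List.take_add
  rw [h2, bal_append]; ring

/-- balance of a prefix of a rotation, wrap-around regime -/
lemma bal_take_rotate_hi (w : List Bool) {k i : ℕ} (hk : k ≤ w.length)
    (hi : w.length - k ≤ i) (hi2 : i ≤ w.length) :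
    bal ((w.rotate k).take i) = bal w - bal (w.take k) + bal (w.take (i - (w.length - k))) := by
  rw [List.rotate_eq_drop_append_take hk]
  rw [bal_take_append]
  have hlen : (w.drop k).length = w.length - k := List.length_drop
  rw [bal_take_of_le (by omega), hlen]
  have htt : (w.take k).take (i - (w.length - k)) = w.take (i - (w.length - k)) := by
    rw [List.take_take]
    congr 1; omega
  rw [htt]
  have : bal w = bal (w.take k) + bal (w.drop k) := by
    conv_lhs => rw [← List.take_append_drop k w]
    rw [bal_append]
  omega

/-- a "good-F" rotation position: all proper prefixes have nonneg balance -/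
def GoodF (m : ℕ) (v : List Bool) : Prop := ∀ j < m, 0 ≤ bal (v.take j)

/-- a "good-T" word: all nonempty prefixes have positive balance -/
def GoodT (m : ℕ) (v : List Bool) : Prop := ∀ j, 1 ≤ j → j ≤ m → 1 ≤ bal (v.take j)


lemma bal_rotate (w : List Bool) (t : ℕ) : bal (w.rotate t) = bal w := by
  simp [bal, count_rotate]

open Classical in
lemma exists_goodF {w : List Bool} {m : ℕ} (hm : w.length = m) (hb : bal w = -1)
    (hm0 : 0 < m) : ∃ s < m, GoodF m (w.rotate s) := by
  obtain ⟨km, hkm, hmin⟩ := Finset.exists_min_image (Finset.range (m + 1))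
    (fun j => bal (w.take j)) ⟨0, by simp⟩
  have hwm : w.take m = w := by rw [← hm]; exact List.take_length
  have hmin' : ∀ j ≤ m, bal (w.take km) ≤ bal (w.take j) :=
    fun j hj => hmin j (Finset.mem_range.mpr (by omega))
  have hkm' : km ≤ m := by have := Finset.mem_range.mp hkm; omega
  have hPex : ∃ k, k ≤ m ∧ bal (w.take k) = bal (w.take km) := ⟨km, hkm', rfl⟩
  obtain ⟨hkle, hkval⟩ := Nat.find_spec hPex
  set k := Nat.find hPex with hk
  have hfirst : ∀ j < k, bal (w.take km) + 1 ≤ bal (w.take j) := by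
    intro j hj
    have h1 := Nat.find_min hPex hj
    have h2 := hmin' j (by omega)
    simp only [not_and] at h1
    have := h1 (by omega)
    omega
  by_cases hkm2 : k = m
  · refine ⟨0, hm0, ?_⟩
    intro j hj
    rw [List.rotate_zero]
    have h1 := hfirst j (by omega)
    have h2 : bal (w.take km) = -1 := by
      have : bal (w.take k) = bal (w.take km) := hkval
      rw [hkm2, hwm] at this; omega
    omega
  · refine ⟨k, by omega, ?_⟩
    intro j hj
    by_cases hcase : j ≤ m - k
    · rw [bal_take_rotate_lo w (by omega) (by omega)]
      have := hmin' (k + j) (by omega)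
      omega
    · rw [bal_take_rotate_hi w (by omega) (by omega) (by omega), hm]
      have := hfirst (j - (m - k)) (by omega)
      omega

open Classical in
lemma exists_goodT {w : List Bool} {m : ℕ} (hm : w.length = m) (hb : bal w = 1)
    (hm0 : 0 < m) : ∃ s < m, GoodT m (w.rotate s) := by
  obtain ⟨km, hkm, hmin⟩ := Finset.exists_min_image (Finset.range (m + 1))
    (fun j => bal (w.take j)) ⟨0, by simp⟩
  have hwm : w.take m = w := by rw [← hm]; exact List.take_length
  have hmin' : ∀ j ≤ m, bal (w.take km) ≤ bal (w.take j) :=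
    fun j hj => hmin j (Finset.mem_range.mpr (by omega))
  have hkm' : km ≤ m := by have := Finset.mem_range.mp hkm; omega
  set k := Nat.findGreatest (fun j => bal (w.take j) = bal (w.take km)) m with hk
  have hkval : bal (w.take k) = bal (w.take km) :=
    Nat.findGreatest_spec (P := fun j => bal (w.take j) = bal (w.take km)) hkm' rfl
  have hkle : k ≤ m := Nat.findGreatest_le m
  have hlast : ∀ j, k < j → j ≤ m → bal (w.take km) + 1 ≤ bal (w.take j) := by
    intro j hj hjm
    have h1 : ¬ (bal (w.take j) = bal (w.take km)) :=
      Nat.findGreatest_is_greatest hj hjm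
    have h2 := hmin' j hjm
    omega
  have hμ0 : bal (w.take km) ≤ 0 := by
    have := hmin' 0 (by omega); simp at this; omega
  have hkm2 : k < m := by
    rcases Nat.lt_or_ge k m with h | h
    · exact h
    · exfalso
      have : k = m := by omega
      rw [this, hwm] at hkval; omega
  refine ⟨k, hkm2, ?_⟩
  intro j hj1 hjm
  by_cases hcase : j ≤ m - k
  · rw [bal_take_rotate_lo w (by omega) (by omega)]
    have := hlast (k + j) (by omega) (by omega)
    omega
  · rw [bal_take_rotate_hi w (by omega) (by omega) (by omega), hm]
    have := hmin' (j - (m - k)) (by omega)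
    omega

lemma not_goodF_rotate {v : List Bool} {m t : ℕ} (hm : v.length = m) (hb : bal v = -1)
    (hg : GoodF m v) (ht0 : 0 < t) (htm : t < m) : ¬ GoodF m (v.rotate t) := by
  intro hg2
  have h1 := hg2 (m - t) (by omega)
  rw [bal_take_rotate_lo v (by omega) (by omega)] at h1
  have h3 : t + (m - t) = m := by omega
  rw [h3, show v.take m = v by rw [← hm]; exact List.take_length] at h1
  have h4 := hg t htm
  omega

lemma not_goodT_rotate {v : List Bool} {m t : ℕ} (hm : v.length = m) (hb : bal v = 1)
    (hg : GoodT m v) (ht0 : 0 < t) (htm : t < m) : ¬ GoodT m (v.rotate t) := by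
  intro hg2
  have h1 := hg2 (m - t) (by omega) (by omega)
  rw [bal_take_rotate_lo v (by omega) (by omega)] at h1
  have h3 : t + (m - t) = m := by omega
  rw [h3, show v.take m = v by rw [← hm]; exact List.take_length] at h1
  have h4 := hg t (by omega) (by omega)
  omega

lemma uniq_goodF {w : List Bool} {m s₁ s₂ : ℕ} (hm : w.length = m) (hb : bal w = -1)
    (h1 : s₁ < m) (h2 : s₂ < m) (g1 : GoodF m (w.rotate s₁)) (g2 : GoodF m (w.rotate s₂)) :
    s₁ = s₂ := by
  by_contra hne
  have key : ∀ a b : ℕ, a < b → b < m → GoodF m (w.rotate a) → GoodF m (w.rotate b) → False := by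
    intro a b hab hbm ga gb
    have he : w.rotate b = (w.rotate a).rotate (b - a) := by
      rw [List.rotate_rotate]; congr 1; omega
    rw [he] at gb
    exact not_goodF_rotate (by rw [List.length_rotate]; exact hm)
      (by rw [bal_rotate]; exact hb) ga (by omega) (by omega) gb
  rcases Nat.lt_or_ge s₁ s₂ with h | h
  · exact key s₁ s₂ h h2 g1 g2
  · exact key s₂ s₁ (by omega) h1 g2 g1

lemma uniq_goodT {w : List Bool} {m s₁ s₂ : ℕ} (hm : w.length = m) (hb : bal w = 1)
    (h1 : s₁ < m) (h2 : s₂ < m) (g1 : GoodT m (w.rotate s₁)) (g2 : GoodT m (w.rotate s₂)) :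
    s₁ = s₂ := by
  by_contra hne
  have key : ∀ a b : ℕ, a < b → b < m → GoodT m (w.rotate a) → GoodT m (w.rotate b) → False := by
    intro a b hab hbm ga gb
    have he : w.rotate b = (w.rotate a).rotate (b - a) := by
      rw [List.rotate_rotate]; congr 1; omega
    rw [he] at gb
    exact not_goodT_rotate (by rw [List.length_rotate]; exact hm)
      (by rw [bal_rotate]; exact hb) ga (by omega) (by omega) gb
  rcases Nat.lt_or_ge s₁ s₂ with h | h
  · exact key s₁ s₂ h h2 g1 g2
  · exact key s₂ s₁ (by omega) h1 g2 g1
lemma rotR_of_rotate {w : List Bool} {s m : ℕ} (hw : w.length = m) (hs : s < m) :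
    rotR s (w.rotate s) = w := by
  have hl : (w.rotate s).length = m := by rw [List.length_rotate]; exact hw
  rw [rotR, hl, Nat.mod_eq_of_lt hs, List.rotate_rotate]
  have : s + (m - s) = m := by omega
  rw [this, ← hw]
  exact List.rotate_length w

lemma rotate_rotR {z : List Bool} {s m : ℕ} (hz : z.length = m) (hs : s < m) :
    (rotR s z).rotate s = z := by
  rw [rotR, hz, Nat.mod_eq_of_lt hs, List.rotate_rotate]
  have : m - s + s = m := by omega
  rw [this, ← hz]
  exact List.rotate_length z

lemma length_rotR (s : ℕ) (z : List Bool) : (rotR s z).length = z.length :=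
  List.length_rotate z _

lemma count_rotR (s : ℕ) (z : List Bool) (b : Bool) : (rotR s z).count b = z.count b :=
  count_rotate z _ b

lemma rotR_mod (s : ℕ) (z : List Bool) : rotR (s % z.length) z = rotR s z := by
  rw [rotR, rotR, Nat.mod_mod_of_dvd s dvd_rfl]

lemma goodF_form {n : ℕ} {v : List Bool} (hl : v.length = 2*n+1) (hc : v.count true = n)
    (hg : GoodF (2*n+1) v) : ∃ x, DyckN n x ∧ v = x ++ [false] := by
  have hx : (v.drop (2*n)).length = 1 := by rw [List.length_drop]; omega
  obtain ⟨c, hcc⟩ := List.length_eq_one_iff.mp hx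
  have hv : v = v.take (2*n) ++ [c] := by rw [← hcc]; exact (List.take_append_drop _ v).symm
  set x := v.take (2*n) with hxdef
  have hxl : x.length = 2*n := by rw [hxdef, List.length_take]; omega
  have hbx : 0 ≤ bal x := hg (2*n) (by omega)
  have hctf := count_tf x
  have hcv : x.count true + [c].count true = n := by
    rw [← List.count_append, ← hv, hc]
  have hcT : c = false := by
    cases c
    · rfl
    · exfalso
      simp at hcv
      simp [bal] at hbx
      omega
  have hcx : x.count true = n := by rw [hcT] at hcv; simpa using hcv
  refine ⟨x, ?_, by rw [hv, hcT]⟩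
  rw [dyckN_iff]
  refine ⟨hxl, hcx, ?_⟩
  intro j
  by_cases hj : j ≤ 2*n
  · have : x.take j = v.take j := by
      rw [hxdef, List.take_take]; congr 1; omega
    rw [this]; exact hg j (by omega)
  · rw [bal_take_of_le (by omega)]
    simp [bal]; omega

lemma form_goodF {n : ℕ} {x : List Bool} (hx : DyckN n x) : GoodF (2*n+1) (x ++ [false]) := by
  intro j hj
  rw [List.take_append_of_le_length (by rw [hx.1]; omega)]
  exact ((dyckN_iff n x).mp hx).2.2 j

lemma goodT_form {n : ℕ} {v : List Bool} (hl : v.length = 2*n+1) (hc : v.count true = n+1)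
    (hg : GoodT (2*n+1) v) : ∃ x, DyckN n x ∧ v = true :: x := by
  obtain ⟨c, t, hv⟩ : ∃ c t, v = c :: t := by
    cases v with
    | nil => simp at hl
    | cons c t => exact ⟨c, t, rfl⟩
  have h1 := hg 1 le_rfl (by omega)
  rw [hv] at h1
  simp [List.take_succ_cons] at h1
  have hcT : c = true := by
    by_contra hcf
    have : c = false := by cases c <;> simp_all
    rw [this] at h1; simp [bal] at h1
  subst hcT
  have hbalv : bal v = 1 := by
    have := count_tf v; simp [bal]; omega
  refine ⟨t, ?_, hv⟩
  rw [dyckN_iff]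
  have htl : t.length = 2*n := by rw [hv] at hl; simp at hl; omega
  have htc : t.count true = n := by rw [hv] at hc; simp [List.count_cons] at hc; omega
  refine ⟨htl, htc, ?_⟩
  intro j
  by_cases hj : j ≤ 2*n
  · have := hg (j+1) (by omega) (by omega)
    rw [hv, List.take_succ_cons] at this
    have he : bal (true :: t.take j) = 1 + bal (t.take j) := by
      have : (true :: t.take j) = [true] ++ t.take j := rfl
      rw [this, bal_append]; simp
    omega
  · rw [bal_take_of_le (by omega)]
    have : bal t = 0 := by
      rw [hv] at hbalv
      have : bal (true :: t) = 1 + bal t := by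
        have h : (true :: t) = [true] ++ t := rfl
        rw [h, bal_append]; simp
      omega
    omega

lemma form_goodT {n : ℕ} {x : List Bool} (hx : DyckN n x) : GoodT (2*n+1) (true :: x) := by
  intro j hj1 hjm
  obtain ⟨i, rfl⟩ : ∃ i, j = i + 1 := ⟨j - 1, by omega⟩
  rw [List.take_succ_cons]
  have he : bal (true :: x.take i) = 1 + bal (x.take i) := by
    have h : (true :: x.take i) = [true] ++ x.take i := rfl
    rw [h, bal_append]; simp
  have := ((dyckN_iff n x).mp hx).2.2 i
  omega

lemma bal_dyckF {n : ℕ} {x : List Bool} (hx : DyckN n x) : bal (x ++ [false]) = -1 := by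
  rw [bal_append, bal_dyckN hx]; simp

lemma bal_dyckT {n : ℕ} {x : List Bool} (hx : DyckN n x) : bal (x ++ [true]) = 1 := by
  rw [bal_append, bal_dyckN hx]; simp

lemma reprF {n : ℕ} {w : List Bool} (hl : w.length = 2*n+1) (hc : w.count true = n) :
    ∃ x s, DyckN n x ∧ s ≤ 2*n ∧ w = rotR s (x ++ [false]) := by
  have hb : bal w = -1 := by have := count_tf w; simp [bal]; omega
  obtain ⟨s, hs, hg⟩ := exists_goodF hl hb (by omega)
  obtain ⟨x, hx, hform⟩ := goodF_form (n := n)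
    (by rw [List.length_rotate]; exact hl) (by rw [count_rotate]; exact hc) hg
  exact ⟨x, s, hx, by omega, by rw [← hform, rotR_of_rotate hl hs]⟩

lemma uniqF {n : ℕ} {x₁ x₂ : List Bool} {s₁ s₂ : ℕ} (h₁ : DyckN n x₁) (h₂ : DyckN n x₂)
    (hs₁ : s₁ ≤ 2*n) (hs₂ : s₂ ≤ 2*n)
    (he : rotR s₁ (x₁ ++ [false]) = rotR s₂ (x₂ ++ [false])) : x₁ = x₂ ∧ s₁ = s₂ := by
  have hl₁ : (x₁ ++ [false]).length = 2*n+1 := by simp [h₁.1]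
  have hl₂ : (x₂ ++ [false]).length = 2*n+1 := by simp [h₂.1]
  set w := rotR s₁ (x₁ ++ [false]) with hw
  have hwl : w.length = 2*n+1 := by rw [hw, length_rotR]; exact hl₁
  have hr₁ : w.rotate s₁ = x₁ ++ [false] := rotate_rotR hl₁ (by omega)
  have hr₂ : w.rotate s₂ = x₂ ++ [false] := by rw [he]; exact rotate_rotR hl₂ (by omega)
  have hbw : bal w = -1 := by
    have := bal_rotate w s₁
    rw [hr₁] at this
    rw [← this, bal_dyckF h₁]
  have hss : s₁ = s₂ := by
    apply uniq_goodF hwl hbw (by omega) (by omega)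
    · rw [hr₁]; exact form_goodF h₁
    · rw [hr₂]; exact form_goodF h₂
  refine ⟨?_, hss⟩
  rw [hss, hr₂] at hr₁
  exact (List.append_cancel_right hr₁).symm

lemma reprT {n : ℕ} {w : List Bool} (hl : w.length = 2*n+1) (hc : w.count true = n+1) :
    ∃ x s, DyckN n x ∧ s ≤ 2*n ∧ w = rotR s (x ++ [true]) := by
  have hb : bal w = 1 := by have := count_tf w; simp [bal]; omega
  obtain ⟨s', hs', hg⟩ := exists_goodT hl hb (by omega)
  obtain ⟨x, hx, hform⟩ := goodT_form (n := n)
    (by rw [List.length_rotate]; exact hl) (by rw [count_rotate]; exact hc) hg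
  set s := (s' + 1) % (2*n+1) with hs
  have hsm : s < 2*n+1 := Nat.mod_lt _ (by omega)
  have hrot : w.rotate s = x ++ [true] := by
    rw [hs, show (2*n+1) = w.length from hl.symm, List.rotate_mod, ← List.rotate_rotate, hform]
    rw [List.rotate_cons_succ, List.rotate_zero]
  exact ⟨x, s, hx, by omega, by rw [← hrot, rotR_of_rotate hl hsm]⟩

lemma uniqT {n : ℕ} {x₁ x₂ : List Bool} {s₁ s₂ : ℕ} (h₁ : DyckN n x₁) (h₂ : DyckN n x₂)
    (hs₁ : s₁ ≤ 2*n) (hs₂ : s₂ ≤ 2*n)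
    (he : rotR s₁ (x₁ ++ [true]) = rotR s₂ (x₂ ++ [true])) : x₁ = x₂ ∧ s₁ = s₂ := by
  have hl₁ : (x₁ ++ [true]).length = 2*n+1 := by simp [h₁.1]
  have hl₂ : (x₂ ++ [true]).length = 2*n+1 := by simp [h₂.1]
  set w := rotR s₁ (x₁ ++ [true]) with hw
  have hwl : w.length = 2*n+1 := by rw [hw, length_rotR]; exact hl₁
  have hr₁ : w.rotate s₁ = x₁ ++ [true] := rotate_rotR hl₁ (by omega)
  have hr₂ : w.rotate s₂ = x₂ ++ [true] := by rw [he]; exact rotate_rotR hl₂ (by omega)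
  have hbw : bal w = 1 := by
    have := bal_rotate w s₁
    rw [hr₁] at this
    rw [← this, bal_dyckT h₁]
  have key : ∀ (x : List Bool) (s : ℕ), DyckN n x → s ≤ 2*n → w.rotate s = x ++ [true] →
      w.rotate ((s + 2*n) % (2*n+1)) = true :: x := by
    intro x s hx hs hr
    rw [show (2*n+1) = w.length from hwl.symm, List.rotate_mod, ← List.rotate_rotate, hr]
    rw [List.rotate_eq_drop_append_take (by simp [hx.1])]
    have hd : (x ++ [true]).drop (2*n) = [true] := by
      rw [← hx.1]; exact List.drop_left
    have ht : (x ++ [true]).take (2*n) = x := by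
      rw [← hx.1]; exact List.take_left
    rw [hd, ht]; rfl
  have g₁ := key x₁ s₁ h₁ hs₁ hr₁
  have g₂ := key x₂ s₂ h₂ hs₂ hr₂
  have ht : (s₁ + 2*n) % (2*n+1) = (s₂ + 2*n) % (2*n+1) := by
    apply uniq_goodT hwl hbw (Nat.mod_lt _ (by omega)) (Nat.mod_lt _ (by omega))
    · rw [g₁]; exact form_goodT h₁
    · rw [g₂]; exact form_goodT h₂
  have hmod : s₁ % (2*n+1) = s₂ % (2*n+1) := by
    have : s₁ + 2*n ≡ s₂ + 2*n [MOD 2*n+1] := ht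
    exact Nat.ModEq.add_right_cancel' (2*n) this
  have hss : s₁ = s₂ := by
    rw [Nat.mod_eq_of_lt (by omega), Nat.mod_eq_of_lt (by omega)] at hmod
    exact hmod
  refine ⟨?_, hss⟩
  rw [hss, hr₂] at hr₁
  exact (List.append_cancel_right hr₁).symm

lemma take_succ_eq {x : List Bool} {j : ℕ} (h : j < x.length) :
    x.take (j+1) = x.take j ++ [x[j]] := by
  rw [List.take_succ, List.getElem?_eq_getElem h]
  rfl

lemma bal_single (c : Bool) : bal [c] = if c then 1 else -1 := by
  cases c <;> simp

open Classical in
/-- first-return decomposition of a nonempty Dyck word -/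
lemma decompose {n : ℕ} {x : List Bool} (hn : 1 ≤ n) (hx : DyckN n x) :
    ∃ u v, IsDyckWord u ∧ IsDyckWord v ∧ x = [true] ++ u ++ [false] ++ v := by
  obtain ⟨hlen, hct, hpre⟩ := (dyckN_iff n x).mp hx
  have hbalx : bal x = 0 := bal_dyckN hx
  have hPex : ∃ j, 0 < j ∧ bal (x.take j) = 0 :=
    ⟨2*n, by omega, by rw [bal_take_of_le (by omega)]; exact hbalx⟩
  obtain ⟨hk0, hkbal⟩ := Nat.find_spec hPex
  have hkle : Nat.find hPex ≤ 2*n := Nat.find_min' hPex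
    ⟨by omega, by rw [bal_take_of_le (by omega)]; exact hbalx⟩
  have hmid : ∀ j, 0 < j → j < Nat.find hPex → 1 ≤ bal (x.take j) := by
    intro j hj0 hjk
    have h1 := Nat.find_min hPex hjk
    have h2 := hpre j
    simp only [not_and] at h1
    have h3 := h1 hj0
    omega
  generalize hgen : Nat.find hPex = k at hk0 hkbal hkle hmid
  have htake1 : x.take 1 = [x[0]'(by omega)] := by
    have h := take_succ_eq (x := x) (j := 0) (by omega)
    simpa using h
  have hA1 : bal (x.take 1) = 1 := by
    have h2 := hpre 1
    rw [htake1, bal_single] at h2 ⊢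
    cases h : (x[0]'(by omega : 0 < x.length)) <;> simp_all
  have hk1 : 1 < k := by
    rcases Nat.lt_or_ge 1 k with h | h
    · exact h
    · exfalso
      have hk1' : k = 1 := by omega
      rw [hk1'] at hkbal
      omega
  have htakek : x.take k = x.take (k-1) ++ [x[k-1]'(by omega)] := by
    have h := take_succ_eq (x := x) (j := k-1) (by omega)
    rw [show k - 1 + 1 = k by omega] at h
    exact h
  have hAk1 : bal (x.take (k-1)) = 1 ∧ (x[k-1]'(by omega : k-1 < x.length)) = false := by
    have hm := hmid (k-1) (by omega) (by omega)
    have hb : bal (x.take k) = bal (x.take (k-1)) + bal [x[k-1]'(by omega : k-1 < x.length)] := by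
      rw [htakek, bal_append]
    rw [bal_single] at hb
    cases h : (x[k-1]'(by omega : k-1 < x.length))
    · simp [h] at hb; exact ⟨by omega, rfl⟩
    · simp [h] at hb; exfalso; omega
  set u := (x.drop 1).take (k-2) with hudef
  set v := x.drop k with hvdef
  have hdlen : (x.drop 1).length = 2*n - 1 := by rw [List.length_drop]; omega
  have hsplit1 : ∀ j, x.take (1 + j) = x.take 1 ++ (x.drop 1).take j := fun j => List.take_add
  have hbal_drop1 : ∀ j, bal ((x.drop 1).take j) = bal (x.take (1 + j)) - 1 := by
    intro j
    rw [hsplit1 j, bal_append, hA1]; ring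
  have hbal_dropk : ∀ j, bal ((x.drop k).take j) = bal (x.take (k + j)) := by
    intro j
    have h : x.take (k + j) = x.take k ++ (x.drop k).take j := List.take_add
    rw [h, bal_append, hkbal]
    ring
  have hx0 : x[0]'(by omega : 0 < x.length) = true := by
    have h := hA1
    rw [htake1, bal_single] at h
    by_contra hc
    rw [Bool.not_eq_true] at hc
    rw [hc] at h
    simp at h
  have hstruct : x = [true] ++ u ++ [false] ++ v := by
    have e1 : x = x.take k ++ v := by rw [hvdef]; exact (List.take_append_drop k x).symm
    have e2 : x.take (k-1) = x.take 1 ++ u := by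
      rw [hudef, ← hsplit1 (k-2)]
      congr 1
      omega
    have e3 : x.take 1 = [true] := by rw [htake1, hx0]
    have e4 : x.take k = [true] ++ u ++ [false] := by
      rw [htakek, e2, e3, hAk1.2]
    rw [show [true] ++ u ++ [false] ++ v = ([true] ++ u ++ [false]) ++ v by simp, ← e4]
    exact e1
  have hbalu : bal u = 0 := by
    rw [hudef, hbal_drop1 (k-2), show 1 + (k-2) = k-1 by omega, hAk1.1]
    ring
  have hpreu : ∀ i, 0 ≤ bal (u.take i) := by
    intro i
    rw [hudef, List.take_take]
    rcases Nat.eq_zero_or_pos (min i (k-2)) with h | h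
    · rw [h]; simp
    · rw [hbal_drop1]
      have := hmid (1 + min i (k-2)) (by omega) (by omega)
      omega
  have hbalv : bal v = 0 := by
    have h := List.take_append_drop k x
    have h2 : bal x = bal (x.take k) + bal v := by rw [hvdef, ← bal_append, h]
    omega
  have hprev : ∀ i, 0 ≤ bal (v.take i) := by
    intro i
    rw [hvdef, hbal_dropk]
    exact hpre (k + i)
  exact ⟨u, v, (isDyckWord_iff u).mpr ⟨hbalu, hpreu⟩,
    (isDyckWord_iff v).mpr ⟨hbalv, hprev⟩, hstruct⟩
lemma isDyckWord_bal {u : List Bool} (hu : IsDyckWord u) : bal u = 0 :=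
  ((isDyckWord_iff u).mp hu).1

lemma isDyckWord_pre {u : List Bool} (hu : IsDyckWord u) : ∀ j, 0 ≤ bal (u.take j) :=
  ((isDyckWord_iff u).mp hu).2

lemma bal_take_block {u v : List Bool} (hu : IsDyckWord u) (hv : IsDyckWord v) (j : ℕ) :
    bal ((u ++ [true] ++ v ++ [false]).take j) =
      bal (u.take j) + bal ([true].take (j - u.length)) +
      bal (v.take (j - u.length - 1)) + bal ([false].take (j - u.length - 1 - v.length)) := by
  have ha : u ++ [true] ++ v ++ [false] = u ++ ([true] ++ (v ++ [false])) := by simp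
  rw [ha, bal_take_append, bal_take_append, bal_take_append]
  simp only [List.length_singleton]
  ring

lemma goodBlock {u v : List Bool} (hu : IsDyckWord u) (hv : IsDyckWord v) :
    ∀ j, 0 ≤ bal ((u ++ [true] ++ v ++ [false]).take j) := by
  intro j
  rw [bal_take_block hu hv]
  by_cases h1 : j ≤ u.length
  · have e1 : j - u.length = 0 := by omega
    rw [e1]
    have e2 : (0:ℕ) - 1 = 0 := rfl
    simp only [e1, e2, Nat.zero_sub, List.take_zero, bal_nil]
    have := isDyckWord_pre hu j
    omega
  · have e0 : bal (u.take j) = 0 := by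
      rw [bal_take_of_le (by omega)]; exact isDyckWord_bal hu
    have e1 : [true].take (j - u.length) = [true] :=
      List.take_of_length_le (by simp; omega)
    have e2 := isDyckWord_pre hv (j - u.length - 1)
    have e3 : 0 ≤ bal ([false].take (j - u.length - 1 - v.length)) + 1 := by
      rcases Nat.eq_zero_or_pos (j - u.length - 1 - v.length) with h | h
      · rw [h]; simp
      · rw [List.take_of_length_le (by simp; omega)]; simp
    rw [e0, e1, bal_true]
    omega

lemma dyckN_block {n : ℕ} {u v : List Bool} (hu : IsDyckWord u) (hv : IsDyckWord v)
    (hlen : u.length + v.length + 2 = 2*n) : DyckN n (u ++ [true] ++ v ++ [false]) := by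
  rw [dyckN_iff]
  have hctu := count_tf u
  have hctv := count_tf v
  have hbu : u.count true = u.count false := hu.1
  have hbv : v.count true = v.count false := hv.1
  refine ⟨by simp; omega, by simp [List.count_append]; omega, goodBlock hu hv⟩

/-- the largest zero of the balance strictly inside a block word is at `u.length` -/
lemma block_balance {u v : List Bool} (hu : IsDyckWord u) (hv : IsDyckWord v) :
    bal ((u ++ [true] ++ v ++ [false]).take u.length) = 0 ∧
    ∀ j, u.length < j → j ≤ u.length + v.length + 1 →
      1 ≤ bal ((u ++ [true] ++ v ++ [false]).take j) := by
  constructor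
  · rw [bal_take_block hu hv]
    simp only [Nat.sub_self, List.take_zero, bal_nil, Nat.zero_sub]
    rw [bal_take_of_le le_rfl, isDyckWord_bal hu]
    have e2 : (0:ℕ) - 1 = 0 := rfl
    simp [e2]
  · intro j hj1 hj2
    rw [bal_take_block hu hv]
    have e0 : bal (u.take j) = 0 := by
      rw [bal_take_of_le (by omega)]; exact isDyckWord_bal hu
    have e1 : [true].take (j - u.length) = [true] :=
      List.take_of_length_le (by simp; omega)
    have e2 := isDyckWord_pre hv (j - u.length - 1)
    have e3 : [false].take (j - u.length - 1 - v.length) = [] := by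
      have : j - u.length - 1 - v.length = 0 := by omega
      rw [this]; rfl
    rw [e0, e1, e3, bal_true, bal_nil]
    omega

lemma block_inj {u v u' v' : List Bool} (hu : IsDyckWord u) (hv : IsDyckWord v)
    (hu' : IsDyckWord u') (hv' : IsDyckWord v')
    (he : u ++ [true] ++ v ++ [false] = u' ++ [true] ++ v' ++ [false]) :
    u = u' ∧ v = v' := by
  have hlen : u.length + v.length = u'.length + v'.length := by
    have := congrArg List.length he
    simp at this
    omega
  have hul : u.length = u'.length := by
    by_contra hne
    have key : ∀ (a b a' b' : List Bool), IsDyckWord a → IsDyckWord b → IsDyckWord a' →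
        IsDyckWord b' → a ++ [true] ++ b ++ [false] = a' ++ [true] ++ b' ++ [false] →
        a.length < a'.length → a.length + b.length = a'.length + b'.length → False := by
      intro a b a' b' ha hb ha' hb' heq hlt hll
      have h1 := (block_balance ha hb).2 a'.length (by omega) (by omega)
      have h2 := (block_balance ha' hb').1
      rw [heq] at h1
      omega
    rcases Nat.lt_or_ge u.length u'.length with h | h
    · exact key u v u' v' hu hv hu' hv' he h hlen
    · exact key u' v' u v hu' hv' hu hv he.symm (by omega) (by omega)
  have hhu : u = u' := by
    have h1 : (u ++ ([true] ++ v ++ [false])).take u.length = u := by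
      rw [List.take_append_of_le_length le_rfl, List.take_length]
    have h2 : (u' ++ ([true] ++ v' ++ [false])).take u'.length = u' := by
      rw [List.take_append_of_le_length le_rfl, List.take_length]
    have ha : u ++ [true] ++ v ++ [false] = u ++ ([true] ++ v ++ [false]) := by simp
    have ha' : u' ++ [true] ++ v' ++ [false] = u' ++ ([true] ++ v' ++ [false]) := by simp
    rw [ha, ha'] at he
    rw [← h1, ← h2, ← hul, he, hul]
  subst hhu
  have ha : u ++ [true] ++ v ++ [false] = u ++ ([true] ++ v ++ [false]) := by simp
  have ha' : u ++ [true] ++ v' ++ [false] = u ++ ([true] ++ v' ++ [false]) := by simp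
  rw [ha, ha'] at he
  have h3 := List.append_cancel_left he
  have h4 : true :: (v ++ [false]) = true :: (v' ++ [false]) := by simpa using h3
  have h5 : v ++ [false] = v' ++ [false] := by injection h4
  exact ⟨rfl, List.append_cancel_right h5⟩
lemma obd_mid {p q : List Bool} {a b : Bool} (hab : a ≠ b) :
    oneBitDiff (p ++ a :: q) (p ++ b :: q) := by
  constructor
  · simp
  · have hfil : ((Finset.range (p ++ a :: q).length).filter
        fun i => (p ++ a :: q)[i]? ≠ (p ++ b :: q)[i]?) = {p.length} := by
      ext i
      simp only [Finset.mem_filter, Finset.mem_range, Finset.mem_singleton]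
      constructor
      · rintro ⟨hi, hne⟩
        by_contra hip
        rcases Nat.lt_or_ge i p.length with h | h
        · exact hne (by rw [List.getElem?_append_left h, List.getElem?_append_left h])
        · have h' : p.length < i := by omega
          obtain ⟨d, hd⟩ : ∃ d, i - p.length = d + 1 := ⟨i - p.length - 1, by omega⟩
          apply hne
          rw [List.getElem?_append_right h, List.getElem?_append_right h, hd,
            List.getElem?_cons_succ, List.getElem?_cons_succ]
      · rintro rfl
        refine ⟨by simp, ?_⟩
        rw [List.getElem?_append_right le_rfl, List.getElem?_append_right le_rfl]
        simp [hab]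
    rw [hfil]
    rfl

lemma get?_rotate' {l : List Bool} {t i : ℕ} (hi : i < l.length) :
    (l.rotate t)[i]? = l[(i + t) % l.length]? := by
  have hL : 0 < l.length := by omega
  have h1 : i < (l.rotate t).length := by rw [List.length_rotate]; exact hi
  exact List.getElem?_rotate hi

lemma obd_rotate {a b : List Bool} (t : ℕ) (h : oneBitDiff a b) :
    oneBitDiff (a.rotate t) (b.rotate t) := by
  obtain ⟨hlen, hcard⟩ := h
  have hL : 0 < a.length := by
    by_contra hc
    have : a.length = 0 := by omega
    rw [this] at hcard
    simp at hcard
  set L := a.length with hLdef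
  have hdvd : t - t % L = L * (t / L) := by
    have := Nat.mod_add_div t L
    omega
  have htm : t % L ≤ t := Nat.mod_le t L
  have htl : t % L < L := Nat.mod_lt t hL
  have hmod1 : ∀ i, i < L → ((i + t) % L + (L - t % L)) % L = i := by
    intro i hi
    rw [Nat.mod_add_mod, show i + t + (L - t % L) = i + (t - t % L) + L by omega, hdvd,
      show i + L * (t / L) + L = i + (t / L + 1) * L by ring, Nat.add_mul_mod_self_right]
    exact Nat.mod_eq_of_lt hi
  have hmod2 : ∀ j, j < L → ((j + (L - t % L)) % L + t) % L = j := by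
    intro j hj
    rw [Nat.mod_add_mod, show j + (L - t % L) + t = j + (t - t % L) + L by omega, hdvd,
      show j + L * (t / L) + L = j + (t / L + 1) * L by ring, Nat.add_mul_mod_self_right]
    exact Nat.mod_eq_of_lt hj
  constructor
  · rw [List.length_rotate, List.length_rotate]; exact hlen
  · have hrl : (a.rotate t).length = L := by rw [List.length_rotate]
    rw [hrl]
    rw [← hcard]
    apply Finset.card_bij' (fun i _ => (i + t) % L) (fun j _ => (j + (L - t % L)) % L)
    · intro i hi
      simp only [Finset.mem_filter, Finset.mem_range] at hi ⊢
      obtain ⟨hi1, hi2⟩ := hi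
      refine ⟨Nat.mod_lt _ hL, ?_⟩
      rw [get?_rotate' (by omega : i < a.length),
        get?_rotate' (by rw [← hlen]; omega : i < b.length), ← hLdef, ← hlen] at hi2
      exact hi2
    · intro j hj
      simp only [Finset.mem_filter, Finset.mem_range] at hj ⊢
      obtain ⟨hj1, hj2⟩ := hj
      refine ⟨Nat.mod_lt _ hL, ?_⟩
      rw [get?_rotate' (by exact Nat.mod_lt _ hL : (j + (L - t % L)) % L < a.length),
        get?_rotate' (by rw [← hlen]; exact Nat.mod_lt _ hL : (j + (L - t % L)) % L < b.length),
        ← hLdef, ← hlen, hmod2 j hj1]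
      exact hj2
    · intro i hi
      simp only [Finset.mem_filter, Finset.mem_range] at hi
      exact hmod1 i hi.1
    · intro j hj
      simp only [Finset.mem_filter, Finset.mem_range] at hj
      exact hmod2 j hj.1

lemma obd_ne {a b : List Bool} (h : oneBitDiff a b) : a ≠ b := by
  rintro rfl
  obtain ⟨-, hcard⟩ := h
  simp at hcard

lemma rotR_eq_rotate {z : List Bool} {m s : ℕ} (hz : z.length = m) (hs : s < m) :
    rotR s z = z.rotate (m - s) := by
  rw [rotR, hz, Nat.mod_eq_of_lt hs]

lemma rotate_cancel {a b : List Bool} {t : ℕ} (hlen : a.length = b.length)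
    (h : a.rotate t = b.rotate t) : a = b := by
  rcases Nat.eq_zero_or_pos a.length with h0 | h0
  · cases a
    · cases b
      · rfl
      · simp at hlen
    · simp at h0
  · have hr : a.rotate (t % a.length) = b.rotate (t % a.length) := by
      rw [List.rotate_mod, hlen, List.rotate_mod, ← hlen] at *
      exact h
    have := congrArg (fun l => l.rotate (a.length - t % a.length)) hr
    simp only [List.rotate_rotate] at this
    have ht : t % a.length + (a.length - t % a.length) = a.length := by
      have := Nat.mod_lt t h0
      omega
    rw [ht] at this
    rw [List.rotate_length] at this
    rw [hlen, List.rotate_length] at this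
    exact this

lemma rotR_succ_cons (c : Bool) {x' : List Bool} {n s : ℕ} (hl : x'.length = 2*n)
    (hs : s ≤ 2*n) :
    rotR (s+1) (x' ++ [c]) = (c :: x').rotate (2*n+1 - s) := by
  have hlen : (x' ++ [c]).length = 2*n+1 := by simp [hl]
  rcases Nat.lt_or_ge s (2*n) with h | h
  · rw [rotR_eq_rotate hlen (by omega)]
    have : 2*n+1 - s = (2*n+1 - (s+1)) + 1 := by omega
    rw [this, List.rotate_cons_succ]
  · have hs2 : s = 2*n := by omega
    subst hs2
    have h1 : rotR (2*n+1) (x' ++ [c]) = x' ++ [c] := by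
      rw [rotR, hlen, Nat.mod_self, Nat.sub_zero, ← hlen, List.rotate_length]
    have h2 : (c :: x').rotate (2*n+1 - 2*n) = x' ++ [c] := by
      rw [show 2*n+1 - 2*n = 1 by omega, List.rotate_cons_succ, List.rotate_zero]
    rw [h1, h2]

lemma rotR_mod' {z : List Bool} {m s : ℕ} (hz : z.length = m) :
    rotR (s % m) z = rotR s z := by
  rw [← hz]; exact rotR_mod s z

lemma ne_helper1 {u v : List Bool} :
    (true : Bool) :: (u ++ [true] ++ v ++ [false]) ≠ ([true] ++ u ++ [false] ++ v) ++ [true] := by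
  intro h
  simp only [List.append_assoc, List.cons_append, List.singleton_append,
    List.cons.injEq, true_and] at h
  have h2 := List.append_cancel_left h
  simp at h2

lemma ne_helper2 {u v : List Bool} :
    (false : Bool) :: (u ++ [true] ++ v ++ [false]) ≠ ([true] ++ u ++ [false] ++ v) ++ [false] := by
  intro h
  simp only [List.append_assoc, List.cons_append, List.singleton_append,
    List.cons.injEq] at h
  exact absurd h.1 (by simp)

lemma len_app {n : ℕ} {z : List Bool} (c : Bool) (hz : DyckN n z) :
    (z ++ [c]).length = 2*n+1 := by
  rw [List.length_append, hz.1]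
  rfl

lemma len_cons {n : ℕ} {z : List Bool} (c : Bool) (hz : DyckN n z) :
    ((c : Bool) :: z).length = 2*n+1 := by
  rw [List.length_cons, hz.1]

lemma cnt_appT {n : ℕ} {z : List Bool} (hz : DyckN n z) :
    (z ++ [true]).count true = n+1 := by
  rw [List.count_append, hz.2.1]
  simp

lemma cnt_appF {n : ℕ} {z : List Bool} (hz : DyckN n z) :
    (z ++ [false]).count true = n := by
  rw [List.count_append, hz.2.1]
  simp

end CF

/-- the permutation `F` of the vertices of the middle levels graph
`M_n` (given in triple notation by `f ⟨x,0,s⟩ = ⟨r x,1,s+1⟩`, `f ⟨x,1,s⟩ = ⟨x,0,s⟩`)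
defines a cycle factor: it is a permutation of the vertex set, each vertex is
adjacent in `M_n` to its image (they differ in one bit), and every orbit has
length at least 3. -/
theorem cycle_factor (n : ℕ) (hn : 1 ≤ n) (r F : List Bool → List Bool)
    (hr : ∀ u v : List Bool, IsDyckWord u → IsDyckWord v →
      r ([true] ++ u ++ [false] ++ v) = u ++ [true] ++ v ++ [false])
    (hF0 : ∀ x s, DyckN n x → s ≤ 2 * n →
      F (rotR s (x ++ [false])) = rotR (s + 1) (r x ++ [true]))
    (hF1 : ∀ x s, DyckN n x → s ≤ 2 * n →
      F (rotR s (x ++ [true])) = rotR s (x ++ [false])) :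
    Set.BijOn F
        {y : List Bool | y.length = 2 * n + 1 ∧
          (y.count true = n ∨ y.count true = n + 1)}
        {y : List Bool | y.length = 2 * n + 1 ∧
          (y.count true = n ∨ y.count true = n + 1)} ∧
      ∀ y : List Bool, y.length = 2 * n + 1 →
        (y.count true = n ∨ y.count true = n + 1) →
        oneBitDiff y (F y) ∧ F y ≠ y ∧ F (F y) ≠ y := by
  classical
  have keyT : ∀ y : List Bool, y.length = 2*n+1 → y.count true = n+1 →
      ∃ x s, DyckN n x ∧ s ≤ 2*n ∧ y = rotR s (x ++ [true]) ∧ F y = rotR s (x ++ [false]) := by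
    intro y hyl hyc
    obtain ⟨x, s, hx, hs, hy⟩ := CF.reprT hyl hyc
    exact ⟨x, s, hx, hs, hy, by rw [hy, hF1 x s hx hs]⟩
  have keyF : ∀ y : List Bool, y.length = 2*n+1 → y.count true = n →
      ∃ x s u v, DyckN n x ∧ s ≤ 2*n ∧ IsDyckWord u ∧ IsDyckWord v ∧
        x = [true] ++ u ++ [false] ++ v ∧
        DyckN n (u ++ [true] ++ v ++ [false]) ∧
        y = rotR s (x ++ [false]) ∧
        F y = rotR ((s+1) % (2*n+1)) ((u ++ [true] ++ v ++ [false]) ++ [true]) := by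
    intro y hyl hyc
    obtain ⟨x, s, hx, hs, hy⟩ := CF.reprF hyl hyc
    obtain ⟨u, v, hu, hv, hxd⟩ := CF.decompose hn hx
    have hlenuv : u.length + v.length + 2 = 2*n := by
      have h := congrArg List.length hxd
      rw [hx.1] at h
      simp at h
      omega
    have hx' : DyckN n (u ++ [true] ++ v ++ [false]) := CF.dyckN_block hu hv hlenuv
    have hrx : r x = u ++ [true] ++ v ++ [false] := by rw [hxd]; exact hr u v hu hv
    refine ⟨x, s, u, v, hx, hs, hu, hv, hxd, hx', hy, ?_⟩
    rw [hy, hF0 x s hx hs, hrx]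
    exact (CF.rotR_mod' (CF.len_app true hx')).symm
  -- count of image
  have hcntF : ∀ y : List Bool, y.length = 2*n+1 → y.count true = n →
      (F y).count true = n + 1 ∧ (F y).length = 2*n+1 := by
    intro y hyl hyc
    obtain ⟨x, s, u, v, hx, hs, hu, hv, hxd, hx', hy', hFy⟩ := keyF y hyl hyc
    constructor
    · rw [hFy, CF.count_rotR, CF.cnt_appT hx']
    · rw [hFy, CF.length_rotR, CF.len_app true hx']
  have hcntT : ∀ y : List Bool, y.length = 2*n+1 → y.count true = n+1 →
      (F y).count true = n ∧ (F y).length = 2*n+1 := by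
    intro y hyl hyc
    obtain ⟨x, s, hx, hs, hy', hFy⟩ := keyT y hyl hyc
    constructor
    · rw [hFy, CF.count_rotR, CF.cnt_appF hx]
    · rw [hFy, CF.length_rotR, CF.len_app false hx]
  have hmaps : Set.MapsTo F
      {y : List Bool | y.length = 2 * n + 1 ∧ (y.count true = n ∨ y.count true = n + 1)}
      {y : List Bool | y.length = 2 * n + 1 ∧ (y.count true = n ∨ y.count true = n + 1)} := by
    intro y hy
    obtain ⟨hyl, hyc⟩ := hy
    rcases hyc with hc | hc
    · obtain ⟨h1, h2⟩ := hcntF y hyl hc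
      exact ⟨h2, Or.inr h1⟩
    · obtain ⟨h1, h2⟩ := hcntT y hyl hc
      exact ⟨h2, Or.inl h1⟩
  have hinj : Set.InjOn F
      {y : List Bool | y.length = 2 * n + 1 ∧ (y.count true = n ∨ y.count true = n + 1)} := by
    intro y₁ hy₁ y₂ hy₂ heq
    obtain ⟨hl₁, hc₁⟩ := hy₁
    obtain ⟨hl₂, hc₂⟩ := hy₂
    rcases hc₁ with hc₁ | hc₁ <;> rcases hc₂ with hc₂ | hc₂
    · obtain ⟨x₁, s₁, u₁, v₁, hx₁, hs₁, hu₁, hv₁, hxd₁, hx'₁, hy'₁, hFy₁⟩ := keyF y₁ hl₁ hc₁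
      obtain ⟨x₂, s₂, u₂, v₂, hx₂, hs₂, hu₂, hv₂, hxd₂, hx'₂, hy'₂, hFy₂⟩ := keyF y₂ hl₂ hc₂
      rw [hFy₁, hFy₂] at heq
      have hm1 : (s₁+1) % (2*n+1) ≤ 2*n := by
        have := Nat.mod_lt (s₁+1) (show 0 < 2*n+1 by omega); omega
      have hm2 : (s₂+1) % (2*n+1) ≤ 2*n := by
        have := Nat.mod_lt (s₂+1) (show 0 < 2*n+1 by omega); omega
      obtain ⟨hx'e, hte⟩ := CF.uniqT hx'₁ hx'₂ hm1 hm2 heq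
      have hse : s₁ = s₂ := by
        have h2 : s₁ % (2*n+1) = s₂ % (2*n+1) :=
          Nat.ModEq.add_right_cancel' 1 hte
        rw [Nat.mod_eq_of_lt (by omega), Nat.mod_eq_of_lt (by omega)] at h2
        exact h2
      obtain ⟨hue, hve⟩ := CF.block_inj hu₁ hv₁ hu₂ hv₂ hx'e
      rw [hy'₁, hy'₂, hxd₁, hxd₂, hue, hve, hse]
    · exfalso
      have c1 := (hcntF y₁ hl₁ hc₁).1
      have c2 := (hcntT y₂ hl₂ hc₂).1
      rw [heq] at c1
      omega
    · exfalso
      have c1 := (hcntT y₁ hl₁ hc₁).1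
      have c2 := (hcntF y₂ hl₂ hc₂).1
      rw [heq] at c1
      omega
    · obtain ⟨x₁, s₁, hx₁, hs₁, hy'₁, hFy₁⟩ := keyT y₁ hl₁ hc₁
      obtain ⟨x₂, s₂, hx₂, hs₂, hy'₂, hFy₂⟩ := keyT y₂ hl₂ hc₂
      rw [hFy₁, hFy₂] at heq
      obtain ⟨hxe, hse⟩ := CF.uniqF hx₁ hx₂ hs₁ hs₂ heq
      rw [hy'₁, hy'₂, hxe, hse]
  constructor
  · have hfin : {y : List Bool | y.length = 2 * n + 1 ∧
        (y.count true = n ∨ y.count true = n + 1)}.Finite :=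
      (List.finite_length_eq Bool (2*n+1)).subset (fun y hy => hy.1)
    exact (hfin.injOn_iff_bijOn_of_mapsTo hmaps).mp hinj
  · intro y hyl hyc
    rcases hyc with hc | hc
    · obtain ⟨x, s, u, v, hx, hs, hu, hv, hxd, hx', hy', hFy⟩ := keyF y hyl hc
      have hyr : y = (x ++ [false]).rotate (2*n+1 - s) := by
        rw [hy', CF.rotR_eq_rotate (CF.len_app _ hx) (by omega)]
      have hFyr : F y = ((true:Bool) :: (u ++ [true] ++ v ++ [false])).rotate (2*n+1 - s) := by
        rw [hFy, CF.rotR_mod' (CF.len_app true hx'), CF.rotR_succ_cons true hx'.1 hs]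
      have hobd : oneBitDiff y (F y) := by
        rw [hFyr, hyr, hxd]
        have e1 : (([true] ++ u ++ [false] ++ v) ++ [false])
            = (true :: u) ++ false :: (v ++ [false]) := by simp
        have e2 : ((true:Bool) :: (u ++ [true] ++ v ++ [false]))
            = (true :: u) ++ true :: (v ++ [false]) := by simp
        rw [e1, e2]
        exact CF.obd_rotate _ (CF.obd_mid (by simp))
      have hFFy : F (F y) = ((false:Bool) :: (u ++ [true] ++ v ++ [false])).rotate (2*n+1 - s) := by
        have ht : (s+1) % (2*n+1) ≤ 2*n := by
          have := Nat.mod_lt (s+1) (show 0 < 2*n+1 by omega); omega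
        rw [hFy, hF1 _ _ hx' ht, CF.rotR_mod' (CF.len_app false hx'),
          CF.rotR_succ_cons false hx'.1 hs]
      refine ⟨hobd, Ne.symm (CF.obd_ne hobd), ?_⟩
      intro hcon
      rw [hFFy, hyr] at hcon
      have hc2 := CF.rotate_cancel (by rw [CF.len_cons false hx', CF.len_app false hx]) hcon
      rw [hxd] at hc2
      exact CF.ne_helper2 hc2
    · obtain ⟨x, s, hx, hs, hy', hFy⟩ := keyT y hyl hc
      have hyr : y = (x ++ [true]).rotate (2*n+1 - s) := by
        rw [hy', CF.rotR_eq_rotate (CF.len_app _ hx) (by omega)]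
      have hFyr : F y = (x ++ [false]).rotate (2*n+1 - s) := by
        rw [hFy, CF.rotR_eq_rotate (CF.len_app _ hx) (by omega)]
      have hobd : oneBitDiff y (F y) := by
        rw [hFyr, hyr]
        exact CF.obd_rotate _ (CF.obd_mid (by simp))
      obtain ⟨u, v, hu, hv, hxd⟩ := CF.decompose hn hx
      have hlenuv : u.length + v.length + 2 = 2*n := by
        have h := congrArg List.length hxd
        rw [hx.1] at h
        simp at h
        omega
      have hx' : DyckN n (u ++ [true] ++ v ++ [false]) := CF.dyckN_block hu hv hlenuv
      have hrx : r x = u ++ [true] ++ v ++ [false] := by rw [hxd]; exact hr u v hu hv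
      have hFFy : F (F y) = ((true:Bool) :: (u ++ [true] ++ v ++ [false])).rotate (2*n+1 - s) := by
        rw [hFy, hF0 x s hx hs, hrx, CF.rotR_succ_cons true hx'.1 hs]
      refine ⟨hobd, Ne.symm (CF.obd_ne hobd), ?_⟩
      intro hcon
      rw [hFFy, hyr] at hcon
      have hc2 := CF.rotate_cancel (by rw [CF.len_cons true hx', CF.len_app true hx]) hcon
      rw [hxd] at hc2
      exact CF.ne_helper1 hc2
end

section
/- For a pullable Dyck word x = 110u0v of length 2n (u, v Dyck words), its pull p(x) := 101u0v is again a Dyck word of length 2n. -/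
lemma prefix_append_cases {α : Type*} {p u w : List α} (h : p <+: u ++ w) :
    p <+: u ∨ ∃ r, p = u ++ r ∧ r <+: w := by
  induction u generalizing p with
  | nil => exact Or.inr ⟨p, rfl, h⟩
  | cons a u ih =>
    rw [List.cons_append, List.prefix_cons_iff] at h
    rcases h with rfl | ⟨t, rfl, ht⟩
    · exact Or.inl (List.nil_prefix)
    · rcases ih ht with h | ⟨r, rfl, hr⟩
      · exact Or.inl (List.cons_prefix_cons.mpr ⟨rfl, h⟩)
      · exact Or.inr ⟨r, rfl, hr⟩

/-- for a pullable Dyck word `x = 110u0v` of length `2n`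
(`u, v` Dyck words), its pull `p(x) = 101u0v` is again a Dyck word of length `2n`. -/
theorem pull_is_dyck (n : ℕ) (u v : List Bool)
    (hu : IsDyckWord u) (hv : IsDyckWord v)
    (hx : DyckN n ([true, true, false] ++ u ++ [false] ++ v)) :
    DyckN n ([true, false, true] ++ u ++ [false] ++ v) := by
  obtain ⟨hlen, hcnt, -⟩ := hx
  refine ⟨by simpa using hlen, by simpa using hcnt, ?_⟩
  intro p hp
  have hp' : p <+: true :: false :: true :: (u ++ [false] ++ v) := by
    simpa using hp
  rw [List.prefix_cons_iff] at hp'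
  rcases hp' with rfl | ⟨t, rfl, ht⟩
  · simp
  rw [List.prefix_cons_iff] at ht
  rcases ht with rfl | ⟨t, rfl, ht⟩
  · simp
  rw [List.prefix_cons_iff] at ht
  rcases ht with rfl | ⟨t, rfl, ht⟩
  · simp
  simp only [List.count_cons, List.append_assoc] at *
  have key : t.count false ≤ t.count true + 1 := by
    rcases prefix_append_cases ht with h | ⟨r, rfl, hr⟩
    · exact (hu.2 t h).trans (Nat.le_succ _)
    · rw [List.singleton_append, List.prefix_cons_iff] at hr
      rcases hr with rfl | ⟨s, rfl, hs⟩
      · simp [List.count_append, hu.1]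
      · have := hv.2 s hs
        simp [List.count_append, List.count_cons, hu.1]
        omega
  simp
  omega
end

section
/- For a pullable Dyck word x = 110u0v of length 2n, the sequence (110u0v0, 110u1v0, 100u1v0, 101u1v0, 101u0v0, 111u0v0) is a 6-cycle in the middle levels graph M_n: consecutive bitstrings (cyclically) differ in exactly one bit, and the sequence alternates between weights n and n+1. -/
lemma obd_aux (p s : List Bool) {b c : Bool} (h : b ≠ c) :
    oneBitDiff (p ++ b :: s) (p ++ c :: s) := by
  constructor
  · simp
  · have he : ((Finset.range (p ++ b :: s).length).filter
        fun i => (p ++ b :: s)[i]? ≠ (p ++ c :: s)[i]?) = {p.length} := by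
      ext i
      simp only [Finset.mem_filter, Finset.mem_range, Finset.mem_singleton]
      constructor
      · rintro ⟨hi, hne⟩
        by_contra hip
        rcases lt_or_gt_of_ne hip with hlt | hgt
        · rw [List.getElem?_append_left hlt, List.getElem?_append_left hlt] at hne
          exact hne rfl
        · have h1 : p.length ≤ i := le_of_lt hgt
          rw [List.getElem?_append_right h1, List.getElem?_append_right h1] at hne
          obtain ⟨j, hj⟩ : ∃ j, i - p.length = j + 1 := ⟨i - p.length - 1, by omega⟩
          rw [hj] at hne
          exact hne rfl
      · rintro rfl
        refine ⟨by simp, ?_⟩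
        rw [List.getElem?_append_right le_rfl, List.getElem?_append_right le_rfl]
        simp [h]
    rw [he]
    simp

/-- for a pullable Dyck word `x = 110u0v` of length `2n`, the six
bitstrings `110u0v0, 110u1v0, 100u1v0, 101u1v0, 101u0v0, 111u0v0` form a 6-cycle
in the middle levels graph `M_n`: they are distinct vertices of `M_n` (length
`2n+1`, weights alternating between `n` and `n+1`) and cyclically consecutive
ones differ in exactly one bit. -/
theorem gluing_six_cycle (n : ℕ) (u v : List Bool)
    (hu : IsDyckWord u) (hv : IsDyckWord v)
    (hx : DyckN n ([true, true, false] ++ u ++ [false] ++ v)) :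
    let a0 := [true, true, false] ++ u ++ [false] ++ v ++ [false]
    let a1 := [true, true, false] ++ u ++ [true] ++ v ++ [false]
    let a2 := [true, false, false] ++ u ++ [true] ++ v ++ [false]
    let a3 := [true, false, true] ++ u ++ [true] ++ v ++ [false]
    let a4 := [true, false, true] ++ u ++ [false] ++ v ++ [false]
    let a5 := [true, true, true] ++ u ++ [false] ++ v ++ [false]
    [a0, a1, a2, a3, a4, a5].Nodup ∧
      (∀ a ∈ [a0, a1, a2, a3, a4, a5], a.length = 2 * n + 1) ∧
      a0.count true = n ∧ a1.count true = n + 1 ∧ a2.count true = n ∧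
      a3.count true = n + 1 ∧ a4.count true = n ∧ a5.count true = n + 1 ∧
      oneBitDiff a0 a1 ∧ oneBitDiff a1 a2 ∧ oneBitDiff a2 a3 ∧
      oneBitDiff a3 a4 ∧ oneBitDiff a4 a5 ∧ oneBitDiff a5 a0 := by
  intro a0 a1 a2 a3 a4 a5
  have hlen : 3 + u.length + 1 + v.length = 2 * n := by
    have := hx.1; simp at this; omega
  have hcnt : 2 + (u.count true + v.count true) = n := by
    have := hx.2.1; simp at this; omega
  have c0 : a0.count true = n := by simp [a0]; omega
  have c1 : a1.count true = n + 1 := by simp [a1]; omega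
  have c2 : a2.count true = n := by simp [a2]; omega
  have c3 : a3.count true = n + 1 := by simp [a3]; omega
  have c4 : a4.count true = n := by simp [a4]; omega
  have c5 : a5.count true = n + 1 := by simp [a5]; omega
  refine ⟨?_, ?_, c0, c1, c2, c3, c4, c5, ?_, ?_, ?_, ?_, ?_, ?_⟩
  · have ne01 : a0 ≠ a1 := fun h => by rw [h, c1] at c0; omega
    have ne34 : a3 ≠ a4 := fun h => by rw [h, c4] at c3; omega
    simp only [List.nodup_cons, List.mem_cons, List.mem_singleton, not_or,
      List.nodup_nil, List.not_mem_nil, and_true]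
    refine ⟨⟨ne01, ?_, ?_, ?_, ?_⟩, ⟨?_, ?_, ?_, ?_⟩, ⟨?_, ?_, ?_⟩, ⟨ne34, ?_⟩, ?_⟩ <;>
      simp [a0, a1, a2, a3, a4, a5]
  · intro a ha
    simp only [List.mem_cons, List.not_mem_nil, or_false] at ha
    rcases ha with rfl|rfl|rfl|rfl|rfl|rfl <;> simp [a0, a1, a2, a3, a4, a5] <;> omega
  · simpa [a0, a1, List.append_assoc] using
      obd_aux ([true, true, false] ++ u) (v ++ [false]) (b := false) (c := true) (by simp)
  · simpa [a1, a2, List.append_assoc] using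
      obd_aux [true] ([false] ++ u ++ [true] ++ v ++ [false]) (b := true) (c := false) (by simp)
  · simpa [a2, a3, List.append_assoc] using
      obd_aux [true, false] (u ++ [true] ++ v ++ [false]) (b := false) (c := true) (by simp)
  · simpa [a3, a4, List.append_assoc] using
      obd_aux ([true, false, true] ++ u) (v ++ [false]) (b := true) (c := false) (by simp)
  · simpa [a4, a5, List.append_assoc] using
      obd_aux [true] ([true] ++ u ++ [false] ++ v ++ [false]) (b := false) (c := true) (by simp)
  · simpa [a5, a0, List.append_assoc] using
      obd_aux [true, true] (u ++ [false] ++ v ++ [false]) (b := true) (c := false) (by simp)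
end

section
/- Every ordered rooted tree with n edges can be transformed into the star with n edges by a finite sequence of tree rotations and pull operations. -/
/-- One transformation step on ordered rooted trees (encoded as Dyck words):
either a tree rotation `1u0v ↦ u1v0`, or a pull `110u0v ↦ 101u0v`. -/
def TreeStep (x y : List Bool) : Prop :=
  (∃ u v : List Bool, IsDyckWord u ∧ IsDyckWord v ∧
      x = [true] ++ u ++ [false] ++ v ∧ y = u ++ [true] ++ v ++ [false]) ∨
    (∃ u v : List Bool, IsDyckWord u ∧ IsDyckWord v ∧
      x = [true, true, false] ++ u ++ [false] ++ v ∧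
      y = [true, false, true] ++ u ++ [false] ++ v)

namespace TreeToStarAux

/-- number of adjacent `11` pairs -/
def c11 : List Bool → ℕ
  | a :: b :: l => (if a = true ∧ b = true then 1 else 0) + c11 (b :: l)
  | _ => 0

/-- length of the longest prefix with no adjacent `00` pair -/
def p00 : List Bool → ℕ
  | false :: false :: _ => 0
  | _ :: l => p00 l + 1
  | [] => 0

/-- number of leading `true`s -/
def ldt : List Bool → ℕ
  | true :: l => ldt l + 1
  | _ => 0

/-- contains an adjacent `00` pair -/
def HasDD (l : List Bool) : Prop := ∃ a b, l = a ++ false :: false :: b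

@[simp] lemma c11_nil : c11 [] = 0 := rfl
@[simp] lemma c11_single (a : Bool) : c11 [a] = 0 := rfl
lemma c11_cons_cons (a b : Bool) (l : List Bool) :
    c11 (a :: b :: l) = (if a = true ∧ b = true then 1 else 0) + c11 (b :: l) := rfl

@[simp] lemma c11_false_cons (l : List Bool) : c11 (false :: l) = c11 l := by
  cases l with
  | nil => rfl
  | cons b m => rw [c11_cons_cons]; simp

lemma c11_true_true (l : List Bool) : c11 (true :: true :: l) = 1 + c11 (true :: l) := by
  rw [c11_cons_cons]; simp

lemma c11_true_false (l : List Bool) : c11 (true :: false :: l) = c11 l := by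
  rw [c11_cons_cons]; simp

/-- bridge indicator for append -/
def br (l₁ l₂ : List Bool) : ℕ :=
  if l₁.getLast? = some true ∧ l₂.head? = some true then 1 else 0

lemma c11_append (l₁ l₂ : List Bool) : c11 (l₁ ++ l₂) = c11 l₁ + c11 l₂ + br l₁ l₂ := by
  induction l₁ with
  | nil => simp [br]
  | cons a l ih =>
    cases l with
    | nil =>
      cases l₂ with
      | nil => simp [br]
      | cons b m =>
        simp only [List.singleton_append, c11_cons_cons, c11_single, br, List.getLast?_singleton,
          List.head?_cons]
        cases a <;> cases b <;> simp <;> omega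
    | cons c r =>
      have : (a :: c :: r) ++ l₂ = a :: c :: (r ++ l₂) := by simp
      rw [this, c11_cons_cons]
      have : c :: (r ++ l₂) = (c :: r) ++ l₂ := by simp
      rw [this, ih, c11_cons_cons, br, br, List.getLast?_cons_cons]
      ring

@[simp] lemma p00_ff (l : List Bool) : p00 (false :: false :: l) = 0 := rfl
lemma p00_true_cons (l : List Bool) : p00 (true :: l) = p00 l + 1 := by
  cases l with
  | nil => rfl
  | cons b m => cases b <;> rfl
lemma p00_false_true (l : List Bool) : p00 (false :: true :: l) = p00 (true :: l) + 1 := rfl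

lemma p00_cons_le (a : Bool) (l : List Bool) : p00 (a :: l) ≤ p00 l + 1 := by
  cases a with
  | true => rw [p00_true_cons]
  | false =>
    cases l with
    | nil => simp [p00]
    | cons b m => cases b <;> simp [p00_false_true, p00_true_cons]

lemma p00_le (l : List Bool) : p00 l ≤ l.length := by
  induction l with
  | nil => simp [p00]
  | cons a l ih =>
    have := p00_cons_le a l
    simp only [List.length_cons]
    omega

lemma p00_append_of_lt (l s : List Bool) (h : p00 l < l.length) : p00 (l ++ s) = p00 l := by
  induction l with
  | nil => simp at h
  | cons a l ih =>
    cases a with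
    | true =>
      rw [List.cons_append, p00_true_cons, p00_true_cons]
      rw [p00_true_cons, List.length_cons] at h
      rw [ih (by omega)]
    | false =>
      cases l with
      | nil => simp [p00] at h
      | cons b m =>
        cases b with
        | false => simp
        | true =>
          rw [List.cons_append, List.cons_append, p00_false_true, p00_false_true]
          rw [p00_false_true, List.length_cons] at h
          have : (true :: m) ++ s = true :: (m ++ s) := by simp
          rw [← List.cons_append, ih (by simpa using h)]

lemma hasDD_lt {l : List Bool} (h : HasDD l) : p00 l < l.length := by
  obtain ⟨a, b, rfl⟩ := h
  induction a with
  | nil => simp [p00]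
  | cons c a ih =>
    have h1 := p00_cons_le c (a ++ false :: false :: b)
    simp only [List.cons_append, List.length_cons]
    omega

@[simp] lemma ldt_true (l : List Bool) : ldt (true :: l) = ldt l + 1 := rfl
@[simp] lemma ldt_false (l : List Bool) : ldt (false :: l) = 0 := rfl
lemma ldt_le (l : List Bool) : ldt l ≤ l.length := by
  induction l with
  | nil => simp [ldt]
  | cons a l ih => cases a <;> simp <;> omega

lemma count_tf (l : List Bool) : l.count true + l.count false = l.length := by
  induction l with
  | nil => simp
  | cons a l ih => cases a <;> simp [List.count_cons] <;> omega



lemma dyck_nil : IsDyckWord [] := ⟨rfl, fun p hp => by simp [List.prefix_nil.mp hp]⟩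

lemma dyck_append {u v : List Bool} (hu : IsDyckWord u) (hv : IsDyckWord v) :
    IsDyckWord (u ++ v) := by
  refine ⟨by simp [List.count_append, hu.1, hv.1], ?_⟩
  intro p hp
  rw [List.prefix_iff_eq_take, List.take_append] at hp
  obtain ⟨m, hm⟩ : ∃ m, p = List.take m u ++ List.take (m - u.length) v := ⟨p.length, hp⟩
  rw [hm]
  simp only [List.count_append]
  have h1 := hu.2 (List.take m u) (List.take_prefix m u)
  have h2 := hv.2 (List.take (m - u.length) v) (List.take_prefix (m - u.length) v)
  omega

lemma dyck_wrap {u : List Bool} (hu : IsDyckWord u) : IsDyckWord (true :: u ++ [false]) := by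
  constructor
  · simp [List.count_append, List.count_cons, hu.1]
  · intro p hp
    rcases p with _ | ⟨a, q⟩
    · simp
    · obtain ⟨r, hr⟩ := hp
      rw [List.cons_append, List.cons_append] at hr
      injection hr with h1 h2
      subst h1
      have hq : q <+: u ++ [false] := ⟨r, h2⟩
      rw [List.prefix_iff_eq_take, List.take_append] at hq
      obtain ⟨m, hm⟩ : ∃ m, q = List.take m u ++ List.take (m - u.length) [false] := ⟨q.length, hq⟩
      rw [hm]
      simp [List.count_cons, List.count_append]
      have h1 := hu.2 (List.take m u) (List.take_prefix m u)
      have h3 : (List.take (m - u.length) [false]).count false ≤ 1 ∧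
          (List.take (m - u.length) [false]).count true = 0 := by
        rcases m - u.length with _ | m' <;> simp
      omega

lemma head_true {x : List Bool} (h : IsDyckWord x) (hne : x ≠ []) : ∃ y, x = true :: y := by
  rcases x with _ | ⟨a, y⟩
  · exact absurd rfl hne
  · cases a
    · exfalso
      have := h.2 [false] ⟨y, rfl⟩
      simp at this
    · exact ⟨y, rfl⟩

lemma last_false {x : List Bool} (h : IsDyckWord x) (hne : x ≠ []) : ∃ y, x = y ++ [false] := by
  have hx := List.dropLast_append_getLast hne
  cases hgl : x.getLast hne with
  | false => exact ⟨x.dropLast, by rw [← hgl, hx]⟩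
  | true =>
    exfalso
    have hdp : x.dropLast <+: x := List.dropLast_prefix x
    have hc := h.2 _ hdp
    have hcx : x.count true = x.dropLast.count true + 1 ∧
        x.count false = x.dropLast.count false := by
      constructor
      · conv_lhs => rw [← hx]
        rw [hgl]; simp [List.count_append]
      · conv_lhs => rw [← hx]
        rw [hgl]; simp [List.count_append]
    have := h.1
    omega

lemma fr {x : List Bool} (h : IsDyckWord x) (hne : x ≠ []) :
    ∃ u v, IsDyckWord u ∧ IsDyckWord v ∧ x = true :: u ++ false :: v := by
  classical
  have hex : ∃ k, 0 < k ∧ (x.take k).count true = (x.take k).count false :=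
    ⟨x.length, List.length_pos_iff.mpr hne, by rw [List.take_length]; exact h.1⟩
  obtain ⟨hk0, hkbal⟩ := Nat.find_spec hex
  set k := Nat.find hex with hkdef
  have hkle : k ≤ x.length := by
    by_contra h'
    push_neg at h'
    exact Nat.find_min hex h'
      ⟨List.length_pos_iff.mpr hne, by rw [List.take_length]; exact h.1⟩
  set p := x.take k with hp
  set v := x.drop k with hv
  have hxpv : p ++ v = x := List.take_append_drop k x
  have hlenp : p.length = k := by
    rw [hp, List.length_take]; omega
  have hvd : IsDyckWord v := by
    constructor
    · have h1 := h.1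
      rw [← hxpv] at h1
      simp only [List.count_append] at h1
      omega
    · intro q hq
      have hpq : p ++ q <+: x := by
        rw [← hxpv]
        exact (List.prefix_append_right_inj p).mpr hq
      have hcount := h.2 _ hpq
      simp only [List.count_append] at hcount
      omega
  have hpne : p ≠ [] := by
    intro h0
    rw [h0] at hlenp
    simp at hlenp
    omega
  have hlast : p.getLast hpne = false := by
    cases hgl : p.getLast hpne with
    | false => rfl
    | true =>
      exfalso
      have hsplit := List.dropLast_append_getLast hpne
      have hdp : p.dropLast <+: x := (List.dropLast_prefix p).trans (List.take_prefix _ _)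
      have hc := h.2 _ hdp
      have hcx : p.count true = p.dropLast.count true + 1 ∧
          p.count false = p.dropLast.count false := by
        constructor
        · conv_lhs => rw [← hsplit]
          rw [hgl]; simp [List.count_append]
        · conv_lhs => rw [← hsplit]
          rw [hgl]; simp [List.count_append]
      omega
  obtain ⟨y, hy⟩ := head_true h hne
  obtain ⟨q, hq⟩ : ∃ q, p = true :: q := by
    rcases hk : k with _ | k'
    · omega
    · refine ⟨y.take k', ?_⟩
      rw [hp, hy, hk]
      simp
  have hqne : q ≠ [] := by
    intro h0
    rw [h0] at hq
    rw [hq] at hkbal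
    simp at hkbal
  obtain ⟨u, hu⟩ : ∃ u, q = u ++ [false] := by
    have hql : q.getLast hqne = false := by
      have : p.getLast hpne = q.getLast hqne := by
        rw [List.getLast_congr _ _ hq, List.getLast_cons hqne]
        exact List.cons_ne_nil _ _
      rw [← this, hlast]
    have hd := List.dropLast_append_getLast hqne
    refine ⟨q.dropLast, ?_⟩
    conv_lhs => rw [← hd]
    rw [hql]
  have hpu : p = true :: u ++ [false] := by rw [hq, hu]; rfl
  have hcu : u.count true = u.count false := by
    rw [hpu] at hkbal
    simp [List.count_append, List.count_cons] at hkbal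
    omega
  have hud : IsDyckWord u := by
    refine ⟨hcu, ?_⟩
    intro r hr
    have htr : true :: r <+: x := by
      have h1 : true :: r <+: true :: u := List.cons_prefix_cons.mpr ⟨rfl, hr⟩
      have h2 : true :: u <+: p := ⟨[false], by rw [hpu]⟩
      exact (h1.trans h2).trans (List.take_prefix _ _)
    have hcr := h.2 _ htr
    simp [List.count_cons] at hcr
    by_contra hlt
    push_neg at hlt
    have heq : r.count false = r.count true + 1 := by omega
    have hrlen : r.length + 1 < k := by
      have h1 : r.length ≤ u.length := hr.length_le
      have h2 : p.length = u.length + 2 := by rw [hpu]; simp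
      omega
    have hxt : x.take (r.length + 1) = true :: r := by
      have h5 := List.prefix_iff_eq_take.mp htr
      simp only [List.length_cons] at h5
      exact h5.symm
    refine Nat.find_min hex hrlen ⟨Nat.succ_pos _, ?_⟩
    rw [hxt]
    simp [List.count_cons]
    omega
  refine ⟨u, v, hud, hvd, ?_⟩
  rw [← hxpv, hpu]
  simp


def rep (n : ℕ) : List Bool := (List.replicate n [true, false]).flatten

lemma rep_zero : rep 0 = [] := rfl
lemma rep_succ (n : ℕ) : rep (n + 1) = true :: false :: rep n := by
  simp [rep, List.replicate_succ]
lemma rep_length (n : ℕ) : (rep n).length = 2 * n := by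
  induction n with
  | zero => rfl
  | succ n ih => rw [rep_succ]; simp [ih]; omega

lemma no00 : ∀ N (x : List Bool), x.length ≤ N → IsDyckWord x → ¬ HasDD x → ∃ k, x = rep k := by
  intro N
  induction N with
  | zero =>
    intro x hl _ _
    exact ⟨0, by rw [List.length_eq_zero_iff.mp (Nat.le_zero.mp hl), rep_zero]⟩
  | succ N ih =>
    intro x hl hx hdd
    by_cases hne : x = []
    · exact ⟨0, by rw [hne, rep_zero]⟩
    obtain ⟨u, v, hu, hv, hfr⟩ := fr hx hne
    by_cases hune : u = []
    · have hfr' : x = true :: false :: v := by rw [hfr, hune]; rfl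
      have hvdd : ¬ HasDD v := by
        rintro ⟨a, b, hab⟩
        exact hdd ⟨true :: false :: a, b, by rw [hfr', hab]; simp⟩
      have hvl : v.length ≤ N := by
        have := congrArg List.length hfr'
        simp at this
        omega
      obtain ⟨k, hk⟩ := ih v hvl hv hvdd
      exact ⟨k + 1, by rw [hfr', hk, rep_succ]⟩
    · exfalso
      obtain ⟨u', hu'⟩ := last_false hu hune
      exact hdd ⟨true :: u', v, by rw [hfr, hu']; simp⟩

lemma dyckN_isDyck {n : ℕ} {x : List Bool} (hx : DyckN n x) : IsDyckWord x := by
  refine ⟨?_, hx.2.2⟩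
  have := count_tf x
  have h1 := hx.1
  have h2 := hx.2.1
  omega

lemma isDyck_dyckN {n : ℕ} {y : List Bool} (hy : IsDyckWord y) (hl : y.length = 2 * n) :
    DyckN n y := by
  refine ⟨hl, ?_, hy.2⟩
  have := count_tf y
  have := hy.1
  omega

/-- the termination measure -/
def W (n : ℕ) (z : List Bool) : ℕ :=
  c11 z * ((2 * n + 2) * (2 * n + 2)) + p00 z * (2 * n + 2) + ldt z

lemma warith1 {n a b c a' b' c' : ℕ} (ha : a' < a) (hb' : b' ≤ 2 * n) (hc' : c' ≤ 2 * n) :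
    a' * ((2 * n + 2) * (2 * n + 2)) + b' * (2 * n + 2) + c' <
      a * ((2 * n + 2) * (2 * n + 2)) + b * (2 * n + 2) + c := by
  have h1 : a' + 1 ≤ a := ha
  nlinarith [Nat.mul_le_mul_right ((2 * n + 2) * (2 * n + 2)) h1,
    Nat.mul_le_mul_right (2 * n + 2) hb']

lemma warith2 {n a b c b' c' : ℕ} (hb : b' < b) (hc' : c' ≤ 2 * n) :
    a * ((2 * n + 2) * (2 * n + 2)) + b' * (2 * n + 2) + c' <
      a * ((2 * n + 2) * (2 * n + 2)) + b * (2 * n + 2) + c := by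
  have h1 : b' + 1 ≤ b := hb
  nlinarith [Nat.mul_le_mul_right (2 * n + 2) h1]


lemma ldt_le_2n {n : ℕ} {z : List Bool} (h : z.length = 2 * n) : ldt z ≤ 2 * n := by
  have := ldt_le z; omega

lemma p00_le_2n {n : ℕ} {z : List Bool} (h : z.length = 2 * n) : p00 z ≤ 2 * n := by
  have := p00_le z; omega

lemma macro_step {n : ℕ} {x : List Bool} (hx : DyckN n x) (hne : x ≠ rep n) :
    ∃ y, DyckN n y ∧ Relation.ReflTransGen TreeStep x y ∧ W n y < W n x := by
  have hd : IsDyckWord x := dyckN_isDyck hx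
  have hlen : x.length = 2 * n := hx.1
  have hxne : x ≠ [] := by
    intro h0
    rw [h0] at hlen
    simp at hlen
    exact hne (by rw [h0, hlen, rep_zero])
  obtain ⟨u, v, hu, hv, hfr⟩ := fr hd hxne
  by_cases hu0 : u = []
  -- ===================== Case C : x = 10v =====================
  · have hfr' : x = true :: false :: v := by rw [hfr, hu0]; rfl
    have hlenv : v.length + 2 = 2 * n := by
      have := congrArg List.length hfr'
      simp at this
      omega
    have hvne : v ≠ [] := by
      intro h0
      rw [h0] at hlenv
      simp at hlenv
      have hn1 : n = 1 := by omega
      exact hne (by rw [hfr', h0, hn1, rep_succ, rep_zero])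
    have hDDv : HasDD v := by
      by_contra hndd
      obtain ⟨k, hk⟩ := no00 v.length v le_rfl hv hndd
      have hkn : k + 1 = n := by
        have := rep_length k
        rw [← hk] at this
        omega
      exact hne (by rw [hfr', hk, ← rep_succ, hkn])
    refine ⟨v ++ [true, false], ?_, ?_, ?_⟩
    · refine isDyck_dyckN ?_ (by simp; omega)
      have h1 := dyck_append hv (dyck_wrap dyck_nil)
      simpa using h1
    · have s1 : TreeStep x (true :: (v ++ [false])) :=
        Or.inl ⟨[], v, dyck_nil, hv, by rw [hfr']; rfl, by simp⟩
      have s2 : TreeStep (true :: (v ++ [false])) (v ++ [true, false]) :=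
        Or.inl ⟨v, [], hv, dyck_nil, by simp, by simp⟩
      exact Relation.ReflTransGen.head s1 (Relation.ReflTransGen.single s2)
    · have hc11x : c11 x = c11 v := by rw [hfr', c11_true_false]
      have hc11y : c11 (v ++ [true, false]) = c11 v := by
        obtain ⟨v', hv'⟩ := last_false hv hvne
        rw [c11_append]
        have hbr : br v [true, false] = 0 := by
          rw [br, hv']
          simp
        rw [hbr]
        simp [c11_cons_cons]
      have hp00x : p00 x = p00 v + 2 := by
        obtain ⟨v'', hv''⟩ := head_true hv hvne
        rw [hfr', hv'', p00_true_cons, p00_false_true, p00_true_cons]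
      have hp00y : p00 (v ++ [true, false]) = p00 v :=
        p00_append_of_lt v [true, false] (hasDD_lt hDDv)
      have hldty : ldt (v ++ [true, false]) ≤ 2 * n := ldt_le_2n (by simp; omega)
      rw [W, W, hc11x, hc11y, hp00x, hp00y]
      exact warith2 (by omega) hldty
  -- ===================== u ≠ [] =====================
  · obtain ⟨a, b, ha, hb, hfru⟩ := fr hu hu0
    by_cases ha0 : a = []
    -- =========== Case P : x = 110 b 0 v, pull ===========
    · have hfru' : u = true :: false :: b := by rw [hfru, ha0]; rfl
      have hxform : x = [true, true, false] ++ b ++ [false] ++ v := by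
        rw [hfr, hfru']; simp
      set y := [true, false, true] ++ b ++ [false] ++ v with hy
      have hstep : TreeStep x y := Or.inr ⟨b, v, hb, hv, hxform, hy⟩
      have hylen : y.length = 2 * n := by
        have h1 := congrArg List.length hxform
        rw [hlen] at h1
        simp at h1
        simp [hy]
        omega
      have hyd : IsDyckWord y := by
        have h1 := dyck_append (dyck_wrap dyck_nil) (dyck_append (dyck_wrap hb) hv)
        have h2 : (true :: ([] : List Bool) ++ [false]) ++ ((true :: b ++ [false]) ++ v) = y := by
          simp [hy]
        rwa [h2] at h1
      refine ⟨y, isDyck_dyckN hyd hylen, Relation.ReflTransGen.single hstep, ?_⟩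
      by_cases hb0 : b = []
      · -- c11 drops by 1
        have hxform2 : x = true :: true :: false :: false :: v := by rw [hxform, hb0]; rfl
        have hyform2 : y = true :: false :: true :: false :: v := by rw [hy, hb0]; rfl
        have hc11x : c11 x = c11 v + 1 := by
          rw [hxform2, c11_true_true, c11_true_false, c11_false_cons]; omega
        have hc11y : c11 y = c11 v := by
          rw [hyform2, c11_true_false, c11_true_false]
        rw [W, W, hc11x, hc11y]
        exact warith1 (by omega) (p00_le_2n hylen) (ldt_le_2n hylen)
      · -- b starts with true : c11, p00 unchanged, ldt drops 2 → 1
        obtain ⟨b₂, hb₂⟩ := head_true hb hb0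
        have hxform2 : x = true :: true :: false :: (b ++ false :: v) := by rw [hxform]; simp
        have hyform2 : y = true :: false :: (true :: (b ++ false :: v)) := by rw [hy]; simp
        have hsplit : b ++ false :: v = true :: (b₂ ++ false :: v) := by rw [hb₂]; simp
        have hc11x : c11 x = c11 (true :: (b₂ ++ false :: v)) + 1 := by
          rw [hxform2, c11_true_true, c11_true_false, hsplit]
          omega
        have hc11y : c11 y = c11 (true :: (b₂ ++ false :: v)) + 1 := by
          rw [hyform2, c11_true_false, hsplit, c11_true_true]
          omega
        have hp00x : p00 x = p00 (true :: (b₂ ++ false :: v)) + 3 := by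
          rw [hxform2, hsplit, p00_true_cons, p00_true_cons, p00_false_true]
        have hp00y : p00 y = p00 (true :: (b₂ ++ false :: v)) + 3 := by
          rw [hyform2, hsplit, p00_true_cons, p00_false_true, p00_true_cons]
        have hldtx : ldt x = 2 := by rw [hxform2]; simp
        have hldty : ldt y = 1 := by rw [hyform2]; simp
        rw [W, W, hc11x, hc11y, hp00x, hp00y, hldtx, hldty]
        omega
    -- =========== Case R : rotation ===========
    · obtain ⟨a₂, ha₂⟩ := head_true ha ha0
      have hu2 : u = true :: true :: (a₂ ++ false :: b) := by rw [hfru, ha₂]; simp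
      have huDD : HasDD u := by
        by_contra hndd
        obtain ⟨k, hk⟩ := no00 u.length u le_rfl hu hndd
        rcases k with _ | k
        · rw [rep_zero] at hk; exact hu0 hk
        · rw [rep_succ, hu2] at hk
          simp at hk
      obtain ⟨u', hu'⟩ := last_false hu hu0
      set y := u ++ [true] ++ v ++ [false] with hy
      have hstep : TreeStep x y := Or.inl ⟨u, v, hu, hv, by rw [hfr]; simp, hy⟩
      have hylen : y.length = 2 * n := by
        have h1 := congrArg List.length hfr
        rw [hlen] at h1
        simp at h1
        simp [hy]
        omega
      have hyd : IsDyckWord y := by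
        have h1 := dyck_append hu (dyck_wrap hv)
        have h2 : u ++ (true :: v ++ [false]) = y := by simp [hy]
        rwa [h2] at h1
      refine ⟨y, isDyck_dyckN hyd hylen, Relation.ReflTransGen.single hstep, ?_⟩
      have hbru : br u (false :: v) = 0 := by simp [br]
      have hbru2 : br u (true :: v ++ [false]) = 0 := by rw [br, hu']; simp
      have hm : u ++ false :: v = true :: true :: ((a₂ ++ false :: b) ++ false :: v) := by
        rw [hu2]; simp
      have hc11m : c11 (u ++ false :: v) = c11 u + c11 v := by
        rw [c11_append, hbru, c11_false_cons]
        omega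
      have hc11x : c11 x = c11 u + c11 v + 1 := by
        have h3 : x = true :: true :: true :: ((a₂ ++ false :: b) ++ false :: v) := by
          rw [hfr, hu2]; simp
        rw [h3, c11_true_true, ← hm, hc11m]
        omega
      by_cases hv0 : v = []
      · -- c11 drops by 1
        have hyform : y = u ++ [true, false] := by rw [hy, hv0]; simp
        have hc11y : c11 y = c11 u := by
          rw [hyform, c11_append]
          have hbr3 : br u [true, false] = 0 := by rw [br, hu']; simp
          rw [hbr3]
          simp [c11_cons_cons]
        rw [W, W, hc11y, hc11x]
        exact warith1 (by omega) (p00_le_2n hylen) (ldt_le_2n hylen)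
      · -- v starts with true : c11 unchanged, p00 drops by 1
        obtain ⟨v₂, hv₂⟩ := head_true hv hv0
        have hc11y : c11 y = c11 u + c11 v + 1 := by
          have h3 : y = u ++ (true :: v ++ [false]) := by rw [hy]; simp
          rw [h3, c11_append, hbru2]
          have h4 : c11 (true :: v ++ [false]) = c11 v + 1 := by
            rw [hv₂]
            rw [show (true :: (true :: v₂) ++ [false] : List Bool) =
              true :: true :: (v₂ ++ [false]) from by simp]
            rw [c11_true_true]
            have h5 : c11 ((true :: v₂) ++ [false]) = c11 (true :: v₂) := by
              rw [c11_append]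
              have hbr4 : br (true :: v₂) [false] = 0 := by simp [br]
              rw [hbr4]; simp
            rw [show true :: (v₂ ++ [false]) = (true :: v₂) ++ [false] from by simp, h5]
            omega
          rw [h4]
          omega
        have hp00x : p00 x = p00 u + 1 := by
          rw [hfr]
          rw [show (true :: u ++ false :: v : List Bool) = true :: (u ++ false :: v) from rfl]
          rw [p00_true_cons, p00_append_of_lt u (false :: v) (hasDD_lt huDD)]
        have hp00y : p00 y = p00 u := by
          have h3 : y = u ++ (true :: v ++ [false]) := by rw [hy]; simp
          rw [h3, p00_append_of_lt u _ (hasDD_lt huDD)]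
        rw [W, W, hp00x, hp00y, hc11x, hc11y]
        exact warith2 (by omega) (ldt_le_2n hylen)


end TreeToStarAux

/-- every ordered rooted tree with `n` edges (Dyck word of length
`2n`) can be transformed into the star with `n` edges (the Dyck word `(10)^n`)
by a finite sequence of tree rotations and pulls. -/
theorem tree_to_star (n : ℕ) (x : List Bool) (hx : DyckN n x) :
    Relation.ReflTransGen TreeStep x (List.flatten (List.replicate n [true, false])) := by
  have main : ∀ k (z : List Bool), DyckN n z → TreeToStarAux.W n z ≤ k →
      Relation.ReflTransGen TreeStep z (TreeToStarAux.rep n) := by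
    intro k
    induction k with
    | zero =>
      intro z hz hW
      by_cases hne : z = TreeToStarAux.rep n
      · rw [hne]
      · obtain ⟨y, _, _, hlt⟩ := TreeToStarAux.macro_step hz hne
        omega
    | succ k ih =>
      intro z hz hW
      by_cases hne : z = TreeToStarAux.rep n
      · rw [hne]
      · obtain ⟨y, hy, hsteps, hlt⟩ := TreeToStarAux.macro_step hz hne
        exact hsteps.trans (ih y hy (by omega))
  exact main (TreeToStarAux.W n x) x hx le_rfl
end
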